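/- arXiv:math/0602319 — 5 statements merged into one kernel-verified Lean document; each statement's English description precedes it below -/
import Mathlib

section
/- Let G be a connected k-regular finite simple graph on n vertices, where k ≥ 2 is even. Then G is k-approximately magic; that is, there exists a bijection f from the edge set of G to {1, 2, ..., nk/2} such that the difference between the largest vertex sum and the smallest vertex sum is at most k. -/
/-- The vertex sum at `v` under an edge labeling `f`: the sum of the labels of all
edges incident with `v`. -/
noncomputable def vertexSum {V : Type*} [Finite V] (G : SimpleGraph V)
    (f : Sym2 V → ℕ) (v : V) : ℕ :=
  ∑ e ∈ (G.incidenceSet v).toFinite.toFinset, f e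

/-- A graph is antimagic if there is a bijection from its edge set to `{1, ..., m}`
(`m` = number of edges) such that all vertex sums are pairwise distinct. -/
def IsAntimagic {V : Type*} [Finite V] (G : SimpleGraph V) : Prop :=
  ∃ f : Sym2 V → ℕ,
    Set.BijOn f G.edgeSet (Set.Icc 1 (Nat.card G.edgeSet)) ∧
    ∀ u v : V, u ≠ v → vertexSum G f u ≠ vertexSum G f v

open SimpleGraph Walk

set_option linter.unusedSectionVars false


def nl (m i : ℕ) : ℕ :=
  if i % 2 = 0 then (if 2*i < m ∨ m % 2 = 1 then i + 1 else m - i)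
  else (if 2*i < m ∨ m % 2 = 1 then m - i else i + 1)

lemma nl_mem {m i : ℕ} (h : i < m) : 1 ≤ nl m i ∧ nl m i ≤ m := by
  unfold nl; split_ifs <;> omega

lemma nl_inj {m i j : ℕ} (hi : i < m) (hj : j < m) (h : nl m i = nl m j) : i = j := by
  unfold nl at h; split_ifs at h <;> omega

lemma nl_sum {m i : ℕ} (h : i < m) : m ≤ nl m i + nl m ((i+1) % m) ∧
    nl m i + nl m ((i+1) % m) ≤ m + 2 := by
  rcases eq_or_lt_of_le (Nat.succ_le_of_lt h) with he | hlt
  · have h0 : (i+1) % m = 0 := by rw [show i+1 = m from he, Nat.mod_self]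
    rw [h0]; unfold nl; split_ifs <;> omega
  · have h0 : (i+1) % m = i+1 := Nat.mod_eq_of_lt hlt
    rw [h0]; unfold nl; split_ifs <;> omega

lemma nl_bijOn (m : ℕ) : Set.BijOn (nl m) (Set.Iio m) (Set.Icc 1 m) := by
  have hmaps : Set.MapsTo (nl m) (Set.Iio m) (Set.Icc 1 m) := by
    intro i hi; exact (nl_mem hi)
  have hinj : Set.InjOn (nl m) (Set.Iio m) := fun i hi j hj h => nl_inj hi hj h
  refine ⟨hmaps, hinj, ?_⟩
  have h1 : (Set.Iio m).ncard = m := by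
    rw [← Nat.card_coe_set_eq, Nat.card_eq_fintype_card]; simp
  have h2 : (Set.Icc 1 m).ncard = m := by
    rw [← Nat.card_coe_set_eq, Nat.card_eq_fintype_card]; simp
  have hfin : (Set.Icc 1 m).Finite := Set.finite_Icc _ _
  have himfin : (nl m '' Set.Iio m).Finite := (Set.finite_Iio m).image _
  have hsub : nl m '' Set.Iio m ⊆ Set.Icc 1 m := hmaps.image_subset
  have hcard : (nl m '' Set.Iio m).ncard = m := by
    rw [Set.ncard_image_of_injOn hinj, h1]
  have := Set.eq_of_subset_of_ncard_le hsub (by rw [hcard, h2]) hfin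
  rw [← this]; exact Set.surjOn_image _ _

lemma nl_surj {m j : ℕ} (h1 : 1 ≤ j) (h2 : j ≤ m) : ∃ i < m, nl m i = j := by
  obtain ⟨i, hi, he⟩ := (nl_bijOn m).surjOn (Set.mem_Icc.mpr ⟨h1, h2⟩)
  exact ⟨i, hi, he⟩

lemma getElem_idx_congr {α} {l : List α} {i j : ℕ} (h : i = j) (hi : i < l.length) :
    l[i]'hi = l[j]'(h ▸ hi) := by subst h; rfl

lemma idx_getElem {α} [DecidableEq α] {l : List α} (h : l.Nodup) {i : ℕ} (hi : i < l.length) :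
    l.idxOf l[i] = i := by
  have hmem : l[i] ∈ l := List.getElem_mem hi
  have h1 : l.idxOf l[i] < l.length := List.idxOf_lt_length_iff.mpr hmem
  have h2 : l[l.idxOf l[i]] = l[i] := List.getElem_idxOf h1
  exact (List.Nodup.getElem_inj_iff h).mp h2

section Euler

open SimpleGraph Walk

variable {V : Type} [Fintype V] [DecidableEq V] {G : SimpleGraph V} [DecidableRel G.Adj]

lemma trail_length_le {u v : V} {W : G.Walk u v} (h : W.IsTrail) :
    W.length ≤ G.edgeFinset.card := by
  classical
  have h1 : W.edges.toFinset.card = W.edges.length := List.toFinset_card_of_nodup h.edges_nodup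
  have h2 : W.edges.toFinset ⊆ G.edgeFinset := by
    intro e he
    rw [List.mem_toFinset] at he
    rw [mem_edgeFinset]
    exact W.edges_subset_edgeSet he
  have := Finset.card_le_card h2
  rw [h1, length_edges] at this
  exact this

lemma exists_fresh_edge {u x : V} {W : G.Walk u x} (hW : W.IsTrail)
    (hodd : ¬ Even (W.edges.countP fun e => x ∈ e)) (hdeg : Even (G.degree x)) :
    ∃ y, G.Adj x y ∧ s(x, y) ∉ W.edges := by
  classical
  set F := hW.edgesFinset.filter (x ∈ ·) with hF
  have hcard : F.card = W.edges.countP fun e => x ∈ e := by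
    rw [← Multiset.coe_countP, Multiset.countP_eq_card_filter]
    rfl
  have hsub : F ⊆ G.incidenceFinset x := by
    intro e he
    rw [hF, Finset.mem_filter] at he
    rw [mem_incidenceFinset]
    exact ⟨W.edges_subset_edgeSet (by exact_mod_cast he.1), he.2⟩
  have hne : F ≠ G.incidenceFinset x := by
    intro h
    rw [← hcard, h, card_incidenceFinset_eq_degree] at hodd
    exact hodd hdeg
  obtain ⟨e, he, hef⟩ := Finset.exists_of_ssubset (hsub.ssubset_of_ne hne)
  rw [mem_incidenceFinset] at he
  obtain ⟨he1, he2⟩ := he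
  refine ⟨Sym2.Mem.other he2, ?_, ?_⟩
  · rw [← SimpleGraph.mem_edgeSet, Sym2.other_spec he2]; exact he1
  · intro hmem
    apply hef
    rw [hF, Finset.mem_filter]
    refine ⟨?_, he2⟩
    rw [← Sym2.other_spec he2]
    exact_mod_cast hmem

lemma closed_trail_even_countP {u : V} {p : G.Walk u u} (hp : p.IsTrail) (x : V) :
    Even (p.edges.countP fun e => x ∈ e) := by
  rw [hp.even_countP_edges_iff]
  intro h; exact absurd rfl h

lemma open_trail_odd_countP {u x : V} {W : G.Walk u x} (hW : W.IsTrail) (hne : x ≠ u) :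
    ¬ Even (W.edges.countP fun e => x ∈ e) := by
  rw [hW.even_countP_edges_iff]
  intro h
  exact (h hne.symm).2 rfl

/-- extension lemma -/
lemma extend_trail {u : V} (p' : G.Walk u u) (hdeg : ∀ v : V, Even (G.degree v)) :
    ∀ (t : ℕ) (x : V) (s : G.Walk u x), x ≠ u → (p'.append s).IsTrail →
      G.edgeFinset.card ≤ (p'.append s).length + t →
      ∃ s' : G.Walk u u, (p'.append s').IsTrail ∧ 0 < s'.length := by
  intro t
  induction t with
  | zero =>
    intro x s hx hT hfuel
    obtain ⟨y, hadj, hfresh⟩ := exists_fresh_edge hT (open_trail_odd_countP hT hx) (hdeg x)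
    have hT' : ((p'.append s).concat hadj).IsTrail := by
      rw [isTrail_def, edges_concat, List.concat_eq_append, List.nodup_append]
      exact ⟨hT.edges_nodup, List.nodup_singleton _, fun a ha b hb => by rw [List.mem_singleton] at hb; subst hb; exact fun h => hfresh (h ▸ ha)⟩
    have := trail_length_le hT'
    rw [length_concat] at this
    omega
  | succ t ih =>
    intro x s hx hT hfuel
    obtain ⟨y, hadj, hfresh⟩ := exists_fresh_edge hT (open_trail_odd_countP hT hx) (hdeg x)
    have heq : p'.append (s.concat hadj) = (p'.append s).concat hadj := by
      rw [concat_eq_append, concat_eq_append, append_assoc]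
    have hT' : (p'.append (s.concat hadj)).IsTrail := by
      rw [heq, isTrail_def, edges_concat, List.concat_eq_append, List.nodup_append]
      exact ⟨hT.edges_nodup, List.nodup_singleton _, fun a ha b hb => by rw [List.mem_singleton] at hb; subst hb; exact fun h => hfresh (h ▸ ha)⟩
    by_cases hyu : y = u
    · subst hyu
      refine ⟨s.concat hadj, hT', ?_⟩
      rw [length_concat]; omega
    · apply ih y (s.concat hadj) hyu hT'
      rw [heq, length_concat]
      omega

/-- find an attachment point on p's support with a fresh edge -/
lemma find_attach {w : V} (p : G.Walk w w) :
    ∀ {a b : V} (q : G.Walk a b), a ∈ p.support → (∃ e ∈ q.edges, e ∉ p.edges) →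
      ∃ (x y : V), x ∈ p.support ∧ G.Adj x y ∧ s(x, y) ∉ p.edges := by
  intro a b q
  induction q with
  | nil => rintro _ ⟨e, he, -⟩; simp at he
  | @cons a c b hadj q ih =>
    intro ha hex
    by_cases hmem : s(a, c) ∈ p.edges
    · apply ih (p.snd_mem_support_of_mem_edges hmem)
      obtain ⟨e, he, hep⟩ := hex
      rw [edges_cons, List.mem_cons] at he
      rcases he with rfl | he
      · exact absurd hmem hep
      · exact ⟨e, he, hep⟩
    · exact ⟨a, c, ha, hadj, hmem⟩

theorem exists_eulerian_circuit (hconn : G.Connected) (hdeg : ∀ v : V, Even (G.degree v)) :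
    ∃ (w : V) (p : G.Walk w w), p.IsEulerian := by
  classical
  have hne : Nonempty V := hconn.nonempty
  obtain ⟨v0⟩ := hne
  set S : Set ℕ := {n | ∃ (w : V) (p : G.Walk w w), p.IsTrail ∧ p.length = n} with hS
  have hS0 : 0 ∈ S := ⟨v0, Walk.nil, IsTrail.nil, rfl⟩
  have hSb : BddAbove S := by
    refine ⟨G.edgeFinset.card, ?_⟩
    rintro n ⟨w, p, hp, rfl⟩
    exact trail_length_le hp
  have hmem := Nat.sSup_mem ⟨0, hS0⟩ hSb
  obtain ⟨w, p, hp, hlen⟩ := hmem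
  refine ⟨w, p, hp.isEulerian_of_forall_mem ?_⟩
  by_contra hc
  push_neg at hc
  obtain ⟨e0, he0, he0p⟩ := hc
  induction e0 using Sym2.ind with
  | _ a b =>
  rw [SimpleGraph.mem_edgeSet] at he0
  -- walk from w to a, then edge to b
  obtain ⟨q0⟩ := hconn w a
  have hq : ∃ e ∈ (q0.concat he0).edges, e ∉ p.edges := by
    refine ⟨s(a, b), ?_, he0p⟩
    rw [edges_concat, List.concat_eq_append]
    simp
  obtain ⟨x, y, hxp, hadj, hfresh⟩ := find_attach p (q0.concat he0) p.start_mem_support hq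
  -- rotate p to x
  set p' := p.rotate x hxp with hp'
  have hp'T : p'.IsTrail := hp.rotate hxp
  have hp'edges : List.Perm p'.edges p.edges := (p.rotate_edges x hxp).perm
  have hp'len : p'.length = p.length := by
    rw [← length_edges, ← length_edges]
    exact hp'edges.length_eq
  have hfresh' : s(x, y) ∉ p'.edges := fun h => hfresh (hp'edges.mem_iff.mp h)
  set s0 : G.Walk x y := Walk.cons hadj Walk.nil with hs0
  have hT0 : (p'.append s0).IsTrail := by
    rw [isTrail_def, edges_append]
    have : s0.edges = [s(x, y)] := rfl
    rw [this, List.nodup_append]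
    exact ⟨hp'T.edges_nodup, List.nodup_singleton _, fun a ha b hb => by rw [List.mem_singleton] at hb; subst hb; exact fun h => hfresh' (h ▸ ha)⟩
  obtain ⟨s', hs'T, hs'pos⟩ :=
    extend_trail p' hdeg G.edgeFinset.card y s0 hadj.ne' hT0 (by omega)
  have hmem' : (p'.append s').length ∈ S := ⟨x, p'.append s', hs'T, rfl⟩
  have hle := le_csSup hSb hmem'
  rw [length_append, hp'len, hlen] at hle
  omega

end Euler

/-- A connected `k`-regular graph on `n` vertices with `k ≥ 2` even is
`k`-approximately magic. -/
theorem connected_even_regular_approx_magic {V : Type} [Finite V] {n k : ℕ}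
    (G : SimpleGraph V) (hn : Nat.card V = n)
    (hreg : ∀ v : V, Nat.card (G.neighborSet v) = k)
    (hk2 : 2 ≤ k) (heven : Even k) (hconn : G.Connected) :
    ∃ f : Sym2 V → ℕ,
      Set.BijOn f G.edgeSet (Set.Icc 1 (n * k / 2)) ∧
      ∀ u v : V, vertexSum G f u ≤ vertexSum G f v + k := by
  classical
  have : Fintype V := Fintype.ofFinite V
  have hdeg : ∀ v : V, G.degree v = k := by
    intro v
    rw [← card_neighborSet_eq_degree, ← Nat.card_eq_fintype_card]
    exact hreg v
  have hdegEven : ∀ v : V, Even (G.degree v) := fun v => (hdeg v) ▸ heven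
  obtain ⟨w, p, hE⟩ := exists_eulerian_circuit hconn hdegEven
  have hT : p.IsTrail := hE.isTrail
  have hnodup := hT.edges_nodup
  set m := p.length with hm
  have hel : p.edges.length = m := p.length_edges
  have hdl : p.darts.length = m := p.length_darts
  have hsl : p.support.length = m + 1 := p.length_support
  have hfc : Fintype.card V = n := by rw [← Nat.card_eq_fintype_card]; exact hn
  have hedgecard : G.edgeFinset.card = m := by
    rw [← hE.edgesFinset_eq]
    exact hel
  have hnk : n * k = 2 * m := by
    have h2 := G.sum_degrees_eq_twice_card_edges
    rw [hedgecard] at h2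
    calc n * k = ∑ _v : V, k := by
          rw [Finset.sum_const, Finset.card_univ, hfc, smul_eq_mul]
      _ = ∑ v : V, G.degree v := Finset.sum_congr rfl fun v _ => (hdeg v).symm
      _ = 2 * m := h2
  have hnk2 : n * k / 2 = m := by omega
  rw [hnk2]
  -- m is positive
  have hm1 : 0 < m := by
    have hv : Nonempty V := hconn.nonempty
    obtain ⟨v0⟩ := hv
    have h1 : G.incidenceFinset v0 ⊆ G.edgeFinset := by
      rw [incidenceFinset_eq_filter]
      exact Finset.filter_subset _ _
    have h2 := Finset.card_le_card h1
    rw [card_incidenceFinset_eq_degree, hdeg v0, hedgecard] at h2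
    exact Nat.lt_of_lt_of_le (by omega) h2
  set f : Sym2 V → ℕ := fun e => if e ∈ p.edges then nl m (p.edges.idxOf e) else 0 with hf
  have hmemiff : ∀ e : Sym2 V, e ∈ p.edges ↔ e ∈ G.edgeSet := fun e => hE.mem_edges_iff
  have hidxlt : ∀ {e}, e ∈ p.edges → p.edges.idxOf e < m := by
    intro e he; rw [← hel]; exact List.idxOf_lt_length_iff.mpr he
  have hfval : ∀ {e}, e ∈ p.edges → f e = nl m (p.edges.idxOf e) := by
    intro e he; simp only [hf, if_pos he]
  -- darts and endpoints
  set D : ℕ → G.Dart := fun i => p.darts.getD i (p.darts[0]'(by omega)) with hDdef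
  have hD : ∀ {i} (hi : i < m), D i = p.darts[i]'(by omega) := by
    intro i hi
    exact List.getD_eq_getElem _ _ (by omega)
  have hfst : ∀ {i} (hi : i < m), (D i).fst = p.support[i]'(by omega) := by
    intro i hi
    rw [hD hi]
    have hlen : i < (p.darts.map (·.fst)).length := by
      rw [List.length_map]; omega
    calc (p.darts[i]'(by omega)).fst
        = (p.darts.map (·.fst))[i]'hlen := by rw [List.getElem_map]
      _ = p.support.dropLast[i]'(p.map_fst_darts ▸ hlen) :=
          List.getElem_of_eq p.map_fst_darts hlen
      _ = p.support[i]'(by omega) := List.getElem_dropLast _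
  have hsnd : ∀ {i} (hi : i < m), (D i).snd = p.support[i+1]'(by omega) := by
    intro i hi
    rw [hD hi]
    have hlen : i < (p.darts.map (·.snd)).length := by
      rw [List.length_map]; omega
    calc (p.darts[i]'(by omega)).snd
        = (p.darts.map (·.snd))[i]'hlen := by rw [List.getElem_map]
      _ = p.support.tail[i]'(p.map_snd_darts ▸ hlen) :=
          List.getElem_of_eq p.map_snd_darts hlen
      _ = p.support[i+1]'(by omega) := List.getElem_tail _
  have hw0 : p.support[0]'(by omega) = w := by
    calc p.support[0]'(by omega)
        = (w :: p.support.tail)[0]'(by simp) := List.getElem_of_eq p.support_eq_cons _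
      _ = w := rfl
  have hwm : p.support[m]'(by omega) = w := by
    have h1 := p.getLast_support
    rw [List.getLast_eq_getElem] at h1
    exact (getElem_idx_congr (show m = p.support.length - 1 by omega) _).trans h1
  have hcyc : ∀ {i}, i < m → (D ((i+1) % m)).fst = (D i).snd := by
    intro i hi
    rcases Nat.lt_or_ge (i+1) m with h | h
    · rw [Nat.mod_eq_of_lt h, hfst h, hsnd hi]
    · have him : i + 1 = m := by omega
      rw [him, Nat.mod_self, hfst hm1, hw0, hsnd hi]
      exact ((getElem_idx_congr (show i + 1 = m from him) _).trans hwm).symm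
  set E : ℕ → Sym2 V := fun i => p.edges.getD i (s(w, w)) with hEdef
  have hEi : ∀ {i}, i < m → E i = (D i).edge := by
    intro i hi
    have he : p.edges = p.darts.map Dart.edge := rfl
    rw [hEdef]
    simp only
    rw [List.getD_eq_getElem _ _ (by omega), hD hi]
    exact (List.getElem_of_eq he _).trans (List.getElem_map _)
  have hEmem : ∀ {i}, i < m → E i ∈ p.edges := by
    intro i hi
    rw [hEdef]
    simp only
    rw [List.getD_eq_getElem _ _ (by omega)]
    exact List.getElem_mem _
  have hidxE : ∀ {i}, i < m → p.edges.idxOf (E i) = i := by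
    intro i hi
    rw [hEdef]
    simp only
    rw [List.getD_eq_getElem _ _ (by omega)]
    exact idx_getElem hnodup (by omega)
  have hvE : ∀ (v : V) {i}, i < m → (v ∈ E i ↔ ((D i).fst = v ∨ (D i).snd = v)) := by
    intro v i hi
    rw [hEi hi]
    constructor
    · intro h
      rcases Sym2.mem_iff.mp h with h | h
      · exact Or.inl h.symm
      · exact Or.inr h.symm
    · intro h
      rcases h with h | h
      · exact Sym2.mem_iff.mpr (Or.inl h.symm)
      · exact Sym2.mem_iff.mpr (Or.inr h.symm)
  -- the three BijOn parts
  refine ⟨f, ⟨?_, ?_, ?_⟩, ?_⟩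
  · intro e he
    rw [← hmemiff] at he
    rw [hfval he]
    exact Set.mem_Icc.mpr (nl_mem (hidxlt he))
  · intro e1 h1 e2 h2 hfe
    rw [← hmemiff] at h1 h2
    rw [hfval h1, hfval h2] at hfe
    have hii := nl_inj (hidxlt h1) (hidxlt h2) hfe
    have g1 : p.edges[p.edges.idxOf e1]'(by rw [hel]; exact hidxlt h1) = e1 :=
      List.getElem_idxOf _
    have g2 : p.edges[p.edges.idxOf e2]'(by rw [hel]; exact hidxlt h2) = e2 :=
      List.getElem_idxOf _
    rw [← g1, ← g2]
    congr 1
  · intro j hj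
    rw [Set.mem_Icc] at hj
    obtain ⟨i, hi, hnl⟩ := nl_surj hj.1 hj.2
    refine ⟨E i, ?_, ?_⟩
    · exact (hmemiff _).mp (hEmem hi)
    · rw [hfval (hEmem hi), hidxE hi, hnl]
  · -- vertex sums
    have key : ∀ v : V, ∃ c : ℕ, 2 * c = k ∧
        c * m ≤ vertexSum G f v ∧ vertexSum G f v ≤ c * m + k := by
      intro v
      set Iv : Finset ℕ := (Finset.range m).filter (fun i => v ∈ E i) with hIvdef
      set Av : Finset ℕ := (Finset.range m).filter (fun i => (D i).fst = v) with hAvdef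
      set Bv : Finset ℕ := (Finset.range m).filter (fun i => (D i).snd = v) with hBvdef
      have hIvAB : Iv = Av ∪ Bv := by
        ext i
        simp only [hIvdef, hAvdef, hBvdef, Finset.mem_filter, Finset.mem_union,
          Finset.mem_range]
        constructor
        · rintro ⟨hi, hv⟩
          rcases (hvE v hi).mp hv with h | h
          · exact Or.inl ⟨hi, h⟩
          · exact Or.inr ⟨hi, h⟩
        · rintro (⟨hi, h⟩ | ⟨hi, h⟩)
          · exact ⟨hi, (hvE v hi).mpr (Or.inl h)⟩
          · exact ⟨hi, (hvE v hi).mpr (Or.inr h)⟩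
      have hdisj : Disjoint Av Bv := by
        rw [Finset.disjoint_left]
        intro i hA hB
        simp only [hAvdef, hBvdef, Finset.mem_filter, Finset.mem_range] at hA hB
        exact (D i).adj.ne (hA.2.trans hB.2.symm)
      -- vertexSum = sum over Iv
      have hsum : vertexSum G f v = ∑ i ∈ Iv, nl m i := by
        unfold vertexSum
        apply Finset.sum_nbij' (i := fun e => p.edges.idxOf e) (j := E)
        · intro e he
          rw [Set.Finite.mem_toFinset] at he
          obtain ⟨he1, he2⟩ := he
          have hep : e ∈ p.edges := (hmemiff e).mpr he1
          simp only [hIvdef, Finset.mem_filter, Finset.mem_range]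
          refine ⟨hidxlt hep, ?_⟩
          have : E (p.edges.idxOf e) = e := by
            rw [hEdef]
            simp only
            rw [List.getD_eq_getElem _ _ (by rw [hel]; exact hidxlt hep)]
            exact List.getElem_idxOf _
          rw [this]
          exact he2
        · intro i hi
          simp only [hIvdef, Finset.mem_filter, Finset.mem_range] at hi
          rw [Set.Finite.mem_toFinset]
          exact ⟨(hmemiff _).mp (hEmem hi.1), hi.2⟩
        · intro e he
          rw [Set.Finite.mem_toFinset] at he
          have hep : e ∈ p.edges := (hmemiff e).mpr he.1
          rw [hEdef]
          simp only
          rw [List.getD_eq_getElem _ _ (by rw [hel]; exact hidxlt hep)]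
          exact List.getElem_idxOf _
        · intro i hi
          simp only [hIvdef, Finset.mem_filter, Finset.mem_range] at hi
          exact hidxE hi.1
        · intro e he
          rw [Set.Finite.mem_toFinset] at he
          exact hfval ((hmemiff e).mpr he.1)
      -- card Iv = k
      have hcardIv : Iv.card = k := by
        have h1 : Iv.card = ((G.incidenceSet v).toFinite.toFinset).card := by
          apply Finset.card_nbij' (i := E) (j := fun e => p.edges.idxOf e)
          · intro i hi
            simp only [hIvdef, Finset.mem_coe, Finset.mem_filter, Finset.mem_range] at hi
            rw [Finset.mem_coe, Set.Finite.mem_toFinset]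
            exact ⟨(hmemiff _).mp (hEmem hi.1), hi.2⟩
          · intro e he
            rw [Finset.mem_coe, Set.Finite.mem_toFinset] at he
            obtain ⟨he1, he2⟩ := he
            have hep : e ∈ p.edges := (hmemiff e).mpr he1
            simp only [hIvdef, Finset.mem_coe, Finset.mem_filter, Finset.mem_range]
            refine ⟨hidxlt hep, ?_⟩
            have : E (p.edges.idxOf e) = e := by
              rw [hEdef]
              simp only
              rw [List.getD_eq_getElem _ _ (by rw [hel]; exact hidxlt hep)]
              exact List.getElem_idxOf _
            rw [this]
            exact he2
          · intro i hi
            simp only [hIvdef, Finset.mem_coe, Finset.mem_filter, Finset.mem_range] at hi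
            exact hidxE hi.1
          · intro e he
            rw [Finset.mem_coe, Set.Finite.mem_toFinset] at he
            have hep : e ∈ p.edges := (hmemiff e).mpr he.1
            rw [hEdef]
            simp only
            rw [List.getD_eq_getElem _ _ (by rw [hel]; exact hidxlt hep)]
            exact List.getElem_idxOf _
        have h2 : (G.incidenceSet v).toFinite.toFinset = G.incidenceFinset v := by
          ext e
          rw [Set.Finite.mem_toFinset, mem_incidenceFinset]
        rw [h1, h2, card_incidenceFinset_eq_degree, hdeg]
      -- the cyclic shift bijection Bv → Av
      set φ : ℕ → ℕ := fun i => if i + 1 = m then 0 else i + 1 with hφdef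
      set ψ : ℕ → ℕ := fun j => if j = 0 then m - 1 else j - 1 with hψdef
      have hmod : ∀ {i}, i < m → (i+1) % m = φ i := by
        intro i hi
        simp only [hφdef]
        split_ifs with h
        · rw [h, Nat.mod_self]
        · exact Nat.mod_eq_of_lt (by omega)
      have hφA : ∀ i ∈ Bv, φ i ∈ Av := by
        intro i hi
        simp only [hBvdef, Finset.mem_filter, Finset.mem_range] at hi
        simp only [hAvdef, Finset.mem_filter, Finset.mem_range]
        constructor
        · simp only [hφdef]; split_ifs <;> omega
        · rw [← hmod hi.1, hcyc hi.1]
          exact hi.2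
      have hψB : ∀ j ∈ Av, ψ j ∈ Bv := by
        intro j hj
        simp only [hAvdef, Finset.mem_filter, Finset.mem_range] at hj
        simp only [hBvdef, Finset.mem_filter, Finset.mem_range]
        have hψlt : ψ j < m := by simp only [hψdef]; split_ifs <;> omega
        refine ⟨hψlt, ?_⟩
        have harith : (ψ j + 1) % m = j := by
          simp only [hψdef]
          split_ifs with h
          · have : m - 1 + 1 = m := by omega
            rw [this, Nat.mod_self, h]
          · have : j - 1 + 1 = j := by omega
            rw [this, Nat.mod_eq_of_lt hj.1]
        rw [← hcyc hψlt, harith]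
        exact hj.2
      have hψφ : ∀ i ∈ Bv, ψ (φ i) = i := by
        intro i hi
        simp only [hBvdef, Finset.mem_filter, Finset.mem_range] at hi
        have hi1 := hi.1
        simp only [hφdef, hψdef]
        by_cases h : i + 1 = m
        · rw [if_pos h, if_pos rfl]
          omega
        · rw [if_neg h, if_neg (by omega)]
          omega
      have hφψ : ∀ j ∈ Av, φ (ψ j) = j := by
        intro j hj
        simp only [hAvdef, Finset.mem_filter, Finset.mem_range] at hj
        have hj1 := hj.1
        simp only [hφdef, hψdef]
        by_cases h : j = 0
        · rw [if_pos h, if_pos (by omega)]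
          omega
        · rw [if_neg h, if_neg (by omega)]
          omega
      -- card equality
      have hcardAB : Av.card = Bv.card :=
        Finset.card_nbij' (i := ψ) (j := φ) hψB hφA hφψ hψφ
      have hcardsplit : Av.card + Bv.card = k := by
        rw [← hcardIv, hIvAB, Finset.card_union_of_disjoint hdisj]
      set c := Bv.card with hc
      have hck : 2 * c = k := by omega
      refine ⟨c, hck, ?_, ?_⟩
      all_goals {
        have hsumA : ∑ i ∈ Av, nl m i = ∑ i ∈ Bv, nl m (φ i) := by
          apply Finset.sum_nbij' (i := ψ) (j := φ) hψB hφA hφψ hψφ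
          intro j hj
          rw [hφψ j hj]
        have hsum2 : vertexSum G f v = ∑ i ∈ Bv, (nl m (φ i) + nl m i) := by
          rw [hsum, hIvAB, Finset.sum_union hdisj, hsumA, ← Finset.sum_add_distrib]
        have hterm : ∀ i ∈ Bv, m ≤ nl m (φ i) + nl m i ∧ nl m (φ i) + nl m i ≤ m + 2 := by
          intro i hi
          simp only [hBvdef, Finset.mem_filter, Finset.mem_range] at hi
          have := nl_sum hi.1
          rw [hmod hi.1] at this
          omega
        have hlow : c * m ≤ ∑ i ∈ Bv, (nl m (φ i) + nl m i) := by
          calc c * m = ∑ _i ∈ Bv, m := by rw [Finset.sum_const, smul_eq_mul]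
            _ ≤ _ := Finset.sum_le_sum (fun i hi => (hterm i hi).1)
        have hhigh : ∑ i ∈ Bv, (nl m (φ i) + nl m i) ≤ c * (m + 2) := by
          calc ∑ i ∈ Bv, (nl m (φ i) + nl m i) ≤ ∑ _i ∈ Bv, (m + 2) :=
                Finset.sum_le_sum (fun i hi => (hterm i hi).2)
            _ = c * (m + 2) := by rw [Finset.sum_const, smul_eq_mul]
        have : c * (m + 2) = c * m + k := by rw [Nat.mul_add]; omega
        omega
      }
    intro u v
    obtain ⟨cu, hcu, hu1, hu2⟩ := key u
    obtain ⟨cv, hcv, hv1, hv2⟩ := key v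
    have hcc : cu = cv := by omega
    calc vertexSum G f u ≤ cu * m + k := hu2
      _ = cv * m + k := by rw [hcc]
      _ ≤ vertexSum G f v + k := by omega
end

section
/- Let G1 be a k1-regular finite simple graph and G2 a k2-regular finite simple graph, with k1 ≥ 1 and k2 ≥ 1 (neither graph need be connected). Then the Cartesian product G1 × G2 is antimagic. -/
set_option linter.unusedSectionVars false
set_option maxHeartbeats 1000000


namespace AM

open Finset SimpleGraph

/-- division-uniqueness helper -/
lemma euclid {M a a' c c' : ℕ} (hc : c < M) (hc' : c' < M)
    (h : a * M + c = a' * M + c') : a = a' ∧ c = c' := by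
  have hM : 0 < M := Nat.pos_of_ne_zero (by omega)
  have h1 : (M * a + c) / M = a + c / M := Nat.mul_add_div hM a c
  have h2 : (M * a' + c') / M = a' + c' / M := Nat.mul_add_div hM a' c'
  rw [Nat.div_eq_of_lt hc, Nat.add_zero] at h1
  rw [Nat.div_eq_of_lt hc', Nat.add_zero] at h2
  have hh : M * a + c = M * a' + c' := by rw [Nat.mul_comm M a, Nat.mul_comm M a']; exact h
  have ha : a = a' := by rw [← h1, ← h2, hh]
  subst ha
  exact ⟨rfl, by omega⟩

/-- the neighbor finset, without decidability assumptions -/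
noncomputable def nbr {V : Type*} [Finite V] (G : SimpleGraph V) (v : V) : Finset V :=
  (G.neighborSet v).toFinite.toFinset

lemma mem_nbr {V : Type*} [Finite V] (G : SimpleGraph V) {v w : V} :
    w ∈ nbr G v ↔ G.Adj v w := by
  simp [nbr, Set.Finite.mem_toFinset]

lemma not_mem_nbr_self {V : Type*} [Finite V] (G : SimpleGraph V) (v : V) :
    v ∉ nbr G v := by simp [mem_nbr]

/-- vertexSum as a sum over neighbors -/
lemma vertexSum_eq_sum_nbr {V : Type*} [Finite V] (G : SimpleGraph V) (f : Sym2 V → ℕ) (v : V) :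
    vertexSum G f v = ∑ w ∈ nbr G v, f s(v, w) := by
  classical
  rw [vertexSum]
  have himg : (G.incidenceSet v).toFinite.toFinset = (nbr G v).image (fun w => s(v, w)) := by
    ext e
    simp only [Set.Finite.mem_toFinset, Finset.mem_image, mem_nbr]
    constructor
    · rintro ⟨he, hv⟩
      induction e with
      | _ x y =>
        rcases Sym2.mem_iff.mp hv with rfl | rfl
        · exact ⟨y, he, rfl⟩
        · exact ⟨x, (SimpleGraph.adj_symm G he), Sym2.eq_swap⟩
    · rintro ⟨w, hw, rfl⟩
      exact ⟨hw, Sym2.mem_mk_left v w⟩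
  rw [himg, Finset.sum_image]
  intro x hx y hy hxy
  have := Sym2.eq_iff.mp hxy
  rcases this with ⟨-, h⟩ | ⟨h1, h2⟩
  · exact h
  · exfalso; rw [Finset.mem_coe, mem_nbr] at hx; rw [h2] at hx; exact G.irrefl hx

/-- sorted rank equiv -/
noncomputable def sortedRank {α : Type*} [Fintype α] (g : α → ℕ) : α ≃ Fin (Fintype.card α) :=
  (Fintype.equivFin α).trans (Tuple.sort (g ∘ (Fintype.equivFin α).symm)).symm

lemma sortedRank_mono {α : Type*} [Fintype α] (g : α → ℕ) {a b : α}
    (h : sortedRank g a < sortedRank g b) : g a ≤ g b := by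
  have hm := Tuple.monotone_sort (g ∘ (Fintype.equivFin α).symm)
  have := hm (le_of_lt h)
  simpa [sortedRank, Function.comp] using this

/-- BijOn from injectivity plus cardinality -/
lemma bijOn_of_injOn_card {α : Type*} (s : Finset α) (t : Finset ℕ) (f : α → ℕ)
    (hm : ∀ x ∈ s, f x ∈ t) (hi : Set.InjOn f ↑s) (hc : t.card ≤ s.card) :
    Set.BijOn f ↑s ↑t := by
  classical
  have himg : s.image f = t := by
    apply Finset.eq_of_subset_of_card_le
    · intro y hy; rcases Finset.mem_image.mp hy with ⟨x, hx, rfl⟩; exact hm x hx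
    · rwa [Finset.card_image_of_injOn hi]
  refine ⟨fun x hx => hm x hx, hi, ?_⟩
  intro y hy
  rw [← himg] at hy
  rcases Finset.mem_image.mp (by exact_mod_cast hy) with ⟨x, hx, rfl⟩
  exact ⟨x, by exact_mod_cast hx, rfl⟩

end AM

namespace AM
open Finset SimpleGraph
open scoped Classical

variable {V₁ V₂ : Type} [Fintype V₁] [Fintype V₂]

/-- decompose an edge of the box product -/
noncomputable def decF (x y : V₁ × V₂) : Option ((Sym2 V₁ × V₂) ⊕ (V₁ × Sym2 V₂)) :=
  if x.2 = y.2 then some (.inl (s(x.1, y.1), x.2))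
  else if x.1 = y.1 then some (.inr (x.1, s(x.2, y.2)))
  else none

lemma decF_symm (x y : V₁ × V₂) : decF x y = decF y x := by
  unfold decF
  by_cases h2 : x.2 = y.2
  · rw [if_pos h2, if_pos h2.symm, Sym2.eq_swap, h2]
  · rw [if_neg h2, if_neg (fun h : y.2 = x.2 => h2 h.symm)]
    by_cases h1 : x.1 = y.1
    · rw [if_pos h1, if_pos h1.symm, Sym2.eq_swap, h1]
    · rw [if_neg h1, if_neg (fun h : y.1 = x.1 => h1 h.symm)]

noncomputable def dec : Sym2 (V₁ × V₂) → Option ((Sym2 V₁ × V₂) ⊕ (V₁ × Sym2 V₂)) :=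
  Sym2.lift ⟨decF, decF_symm⟩

lemma dec_layer (u v : V₁) (i : V₂) :
    dec s((u,i),(v,i)) = some (.inl (s(u,v), i)) := by
  rw [dec, Sym2.lift_mk]
  simp [decF]

lemma dec_col (u : V₁) {i j : V₂} (h : i ≠ j) :
    dec s((u,i),(u,j)) = some (.inr (u, s(i,j))) := by
  rw [dec, Sym2.lift_mk]
  simp [decF, h]

lemma edge_cases {G₁ : SimpleGraph V₁} {G₂ : SimpleGraph V₂} {e : Sym2 (V₁ × V₂)}
    (he : e ∈ (G₁ □ G₂).edgeSet) :
    (∃ u v i, G₁.Adj u v ∧ e = s((u,i),(v,i))) ∨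
    (∃ u i j, G₂.Adj i j ∧ e = s((u,i),(u,j))) := by
  induction e with
  | _ x y =>
    rw [SimpleGraph.mem_edgeSet, SimpleGraph.boxProd_adj] at he
    rcases he with ⟨ha, h2⟩ | ⟨ha, h1⟩
    · exact Or.inl ⟨x.1, y.1, x.2, ha, by rw [show x = (x.1, x.2) from rfl, h2]⟩
    · exact Or.inr ⟨x.1, x.2, y.2, ha, by rw [show x = (x.1, x.2) from rfl,
        show y = (y.1, y.2) from rfl, h1]⟩

/-- finset of edges -/
noncomputable def edgesOf {V : Type*} [Finite V] (G : SimpleGraph V) : Finset (Sym2 V) :=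
  G.edgeSet.toFinite.toFinset

lemma mem_edgesOf {V : Type*} [Finite V] {G : SimpleGraph V} {e : Sym2 V} :
    e ∈ edgesOf G ↔ e ∈ G.edgeSet := Set.Finite.mem_toFinset _

noncomputable def Edom (G₁ : SimpleGraph V₁) (G₂ : SimpleGraph V₂) :
    Finset ((Sym2 V₁ × V₂) ⊕ (V₁ × Sym2 V₂)) :=
  (edgesOf G₁ ×ˢ (univ : Finset V₂)).disjSum ((univ : Finset V₁) ×ˢ edgesOf G₂)

lemma card_Edom (G₁ : SimpleGraph V₁) (G₂ : SimpleGraph V₂) :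
    (Edom G₁ G₂).card = (edgesOf G₁).card * Fintype.card V₂
      + Fintype.card V₁ * (edgesOf G₂).card := by
  rw [Edom, Finset.card_disjSum, Finset.card_product, Finset.card_product,
    Finset.card_univ, Finset.card_univ]

section Lab
variable (base : Sym2 V₁ → ℕ) (ψ : Sym2 V₂ → ℕ) (offA : V₁ → ℕ) (ρ : V₂ → ℕ)

def lab : ((Sym2 V₁ × V₂) ⊕ (V₁ × Sym2 V₂)) → ℕ
  | .inl (fe, i) => base fe + ρ i + 1
  | .inr (u, e2) => offA u + ψ e2 + 1

noncomputable def flab : Sym2 (V₁ × V₂) → ℕ := fun e => (dec e).elim 0 (lab base ψ offA ρ)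

lemma flab_layer (u v : V₁) (i : V₂) :
    flab base ψ offA ρ s((u,i),(v,i)) = base s(u,v) + ρ i + 1 := by
  rw [flab, dec_layer]; rfl

lemma flab_col (u : V₁) {i j : V₂} (h : i ≠ j) :
    flab base ψ offA ρ s((u,i),(u,j)) = offA u + ψ s(i,j) + 1 := by
  rw [flab, dec_col u h]; rfl

end Lab
end AM

set_option linter.unusedSectionVars false
namespace AM
open Finset SimpleGraph
open scoped Classical

variable {V₁ V₂ : Type} [Fintype V₁] [Fintype V₂]

lemma nbr_boxProd (G₁ : SimpleGraph V₁) (G₂ : SimpleGraph V₂) (u : V₁) (i : V₂) :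
    nbr (G₁ □ G₂) (u,i)
      = (nbr G₁ u).image (fun v => (v,i)) ∪ (nbr G₂ i).image (fun j => (u,j)) := by
  ext ⟨a,b⟩
  simp only [mem_nbr, SimpleGraph.boxProd_adj, Finset.mem_union, Finset.mem_image]
  constructor
  · rintro (⟨ha, hb⟩ | ⟨hb, ha⟩)
    · exact Or.inl ⟨a, ha, by rw [hb]⟩
    · exact Or.inr ⟨b, hb, by rw [ha]⟩
  · rintro (⟨v, hv, hvb⟩ | ⟨j, hj, hjb⟩)
    · obtain ⟨rfl, rfl⟩ := Prod.mk.injEq .. ▸ hvb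
      exact Or.inl ⟨hv, rfl⟩
    · obtain ⟨rfl, rfl⟩ := Prod.mk.injEq .. ▸ hjb
      exact Or.inr ⟨hj, rfl⟩

section Core
variable (G₁ : SimpleGraph V₁) (G₂ : SimpleGraph V₂)
variable (base : Sym2 V₁ → ℕ) (ψ : Sym2 V₂ → ℕ) (offA : V₁ → ℕ) (ρ : V₂ → ℕ)

lemma vertexSum_flab (k₁ k₂ : ℕ)
    (hreg₁ : ∀ u, (nbr G₁ u).card = k₁) (hreg₂ : ∀ i, (nbr G₂ i).card = k₂)
    (u : V₁) (i : V₂) :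
    vertexSum (G₁ □ G₂) (flab base ψ offA ρ) (u,i)
      = ((∑ v ∈ nbr G₁ u, base s(u,v)) + k₂ * offA u)
        + (k₁ * ρ i + (∑ j ∈ nbr G₂ i, ψ s(i,j))) + (k₁ + k₂) := by
  rw [vertexSum_eq_sum_nbr, nbr_boxProd]
  rw [Finset.sum_union]
  · have h1 : ∑ x ∈ (nbr G₁ u).image (fun v => (v,i)), flab base ψ offA ρ s((u,i), x)
        = ∑ v ∈ nbr G₁ u, (base s(u,v) + ρ i + 1) := by
      rw [Finset.sum_image (by intro x _ y _ h; exact (Prod.mk.injEq .. ▸ h).1)]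
      exact Finset.sum_congr rfl fun v _ => flab_layer base ψ offA ρ u v i
    have h2 : ∑ x ∈ (nbr G₂ i).image (fun j => (u,j)), flab base ψ offA ρ s((u,i), x)
        = ∑ j ∈ nbr G₂ i, (offA u + ψ s(i,j) + 1) := by
      rw [Finset.sum_image (by intro x _ y _ h; exact (Prod.mk.injEq .. ▸ h).2)]
      refine Finset.sum_congr rfl fun j hj => ?_
      exact flab_col base ψ offA ρ u (G₂.ne_of_adj ((mem_nbr G₂).mp hj))
    rw [h1, h2]
    rw [Finset.sum_add_distrib, Finset.sum_add_distrib, Finset.sum_const, Finset.sum_const,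
      Finset.sum_add_distrib, Finset.sum_add_distrib, Finset.sum_const, Finset.sum_const,
      hreg₁ u, hreg₂ i]
    simp only [smul_eq_mul, mul_one]
    ring
  · rw [Finset.disjoint_left]
    rintro ⟨a,b⟩ hx hy
    rcases Finset.mem_image.mp hx with ⟨v, hv, hvb⟩
    rcases Finset.mem_image.mp hy with ⟨j, hj, hjb⟩
    obtain ⟨rfl, rfl⟩ := Prod.mk.injEq .. ▸ hvb
    obtain ⟨h1, h2⟩ := Prod.mk.injEq .. ▸ hjb
    subst h2
    exact G₂.ne_of_adj ((mem_nbr G₂).mp hj) rfl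

lemma inl_mem_Edom {G₁ : SimpleGraph V₁} (G₂ : SimpleGraph V₂) {u v : V₁} (ha : G₁.Adj u v)
    (i : V₂) : (Sum.inl (s(u,v), i) : (Sym2 V₁ × V₂) ⊕ (V₁ × Sym2 V₂)) ∈ Edom G₁ G₂ := by
  rw [Edom, Finset.mem_disjSum]
  exact Or.inl ⟨(s(u,v), i), Finset.mem_product.mpr
    ⟨mem_edgesOf.mpr ((SimpleGraph.mem_edgeSet _).mpr ha), Finset.mem_univ _⟩, rfl⟩

lemma inr_mem_Edom (G₁ : SimpleGraph V₁) {G₂ : SimpleGraph V₂} {i j : V₂} (ha : G₂.Adj i j)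
    (u : V₁) : (Sum.inr (u, s(i,j)) : (Sym2 V₁ × V₂) ⊕ (V₁ × Sym2 V₂)) ∈ Edom G₁ G₂ := by
  rw [Edom, Finset.mem_disjSum]
  exact Or.inr ⟨(u, s(i,j)), Finset.mem_product.mpr
    ⟨Finset.mem_univ _, mem_edgesOf.mpr ((SimpleGraph.mem_edgeSet _).mpr ha)⟩, rfl⟩

lemma layer_eq {u v u' v' : V₁} (i : V₂) (h : s(u,v) = s(u',v')) :
    s(((u,i) : V₁ × V₂),(v,i)) = s(((u',i) : V₁ × V₂),(v',i)) := by
  rcases Sym2.eq_iff.mp h with ⟨rfl, rfl⟩ | ⟨rfl, rfl⟩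
  · rfl
  · exact Sym2.eq_swap

lemma col_eq {i j i' j' : V₂} (u : V₁) (h : s(i,j) = s(i',j')) :
    s(((u,i) : V₁ × V₂),(u,j)) = s(((u,i') : V₁ × V₂),(u,j')) := by
  rcases Sym2.eq_iff.mp h with ⟨rfl, rfl⟩ | ⟨rfl, rfl⟩
  · rfl
  · exact Sym2.eq_swap

/-- transfer BijOn from the abstract domain to the edge set -/
lemma bijOn_flab (m : ℕ)
    (hbij : Set.BijOn (lab base ψ offA ρ) ↑(Edom G₁ G₂) (Set.Icc 1 m)) :
    Set.BijOn (flab base ψ offA ρ) (G₁ □ G₂).edgeSet (Set.Icc 1 m) := by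
  constructor
  · intro e he
    rcases edge_cases he with ⟨u, v, i, ha, rfl⟩ | ⟨u, i, j, ha, rfl⟩
    · rw [flab_layer]
      exact hbij.mapsTo (inl_mem_Edom G₂ ha i)
    · rw [flab_col _ _ _ _ _ (G₂.ne_of_adj ha)]
      exact hbij.mapsTo (inr_mem_Edom G₁ ha u)
  constructor
  · intro e he e' he' hf
    rcases edge_cases he with ⟨u, v, i, ha, rfl⟩ | ⟨u, i, j, ha, rfl⟩ <;>
      rcases edge_cases he' with ⟨u', v', i', ha', rfl⟩ | ⟨u', i', j', ha', rfl⟩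
    · rw [flab_layer, flab_layer] at hf
      have heq := hbij.injOn (inl_mem_Edom G₂ ha i) (inl_mem_Edom G₂ ha' i')
        (by simpa [lab] using hf)
      obtain ⟨h1, h2⟩ := Prod.ext_iff.mp (Sum.inl.inj heq)
      subst h2
      exact layer_eq i h1
    · rw [flab_layer, flab_col _ _ _ _ _ (G₂.ne_of_adj ha')] at hf
      have heq := hbij.injOn (inl_mem_Edom G₂ ha i) (inr_mem_Edom G₁ ha' u')
        (by simpa [lab] using hf)
      exact absurd heq (by simp)
    · rw [flab_col _ _ _ _ _ (G₂.ne_of_adj ha), flab_layer] at hf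
      have heq := hbij.injOn (inr_mem_Edom G₁ ha u) (inl_mem_Edom G₂ ha' i')
        (by simpa [lab] using hf)
      exact absurd heq (by simp)
    · rw [flab_col _ _ _ _ _ (G₂.ne_of_adj ha), flab_col _ _ _ _ _ (G₂.ne_of_adj ha')] at hf
      have heq := hbij.injOn (inr_mem_Edom G₁ ha u) (inr_mem_Edom G₁ ha' u')
        (by simpa [lab] using hf)
      obtain ⟨h1, h2⟩ := Prod.ext_iff.mp (Sum.inr.inj heq)
      subst h1
      exact col_eq u h2
  · intro y hy
    rcases hbij.surjOn hy with ⟨x, hx, rfl⟩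
    rcases x with ⟨fe, i⟩ | ⟨u, e2⟩
    · rw [Edom, Finset.mem_coe, Finset.mem_disjSum] at hx
      rcases hx with ⟨⟨fe', i'⟩, hmem, heq⟩ | ⟨_, _, heq⟩
      swap; · exact absurd heq (by simp)
      have h12 := Prod.ext_iff.mp (Sum.inl.inj heq)
      have h1 : fe' = fe := h12.1
      have hmem1 : fe' ∈ edgesOf G₁ := (Finset.mem_product.mp hmem).1
      rw [h1] at hmem1
      have hfe : fe ∈ G₁.edgeSet := mem_edgesOf.mp hmem1
      induction fe with
      | _ u v =>
        have ha : G₁.Adj u v := (SimpleGraph.mem_edgeSet _).mp hfe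
        refine ⟨s((u,i),(v,i)), ?_, ?_⟩
        · exact (SimpleGraph.mem_edgeSet _).mpr (SimpleGraph.boxProd_adj.mpr (Or.inl ⟨ha, rfl⟩))
        · rw [flab_layer]; rfl
    · rw [Edom, Finset.mem_coe, Finset.mem_disjSum] at hx
      rcases hx with ⟨_, _, heq⟩ | ⟨⟨u', e2'⟩, hmem, heq⟩
      · exact absurd heq (by simp)
      have h12 := Prod.ext_iff.mp (Sum.inr.inj heq)
      have h2 : e2' = e2 := h12.2
      have hmem2 : e2' ∈ edgesOf G₂ := (Finset.mem_product.mp hmem).2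
      rw [h2] at hmem2
      have he2 : e2 ∈ G₂.edgeSet := mem_edgesOf.mp hmem2
      induction e2 with
      | _ i j =>
        have ha : G₂.Adj i j := (SimpleGraph.mem_edgeSet _).mp he2
        refine ⟨s((u,i),(u,j)), ?_, ?_⟩
        · exact (SimpleGraph.mem_edgeSet _).mpr (SimpleGraph.boxProd_adj.mpr (Or.inr ⟨ha, rfl⟩))
        · rw [flab_col _ _ _ _ _ (G₂.ne_of_adj ha)]; rfl

end Core
end AM

namespace AM
open Finset SimpleGraph
open scoped Classical

variable {V₁ V₂ : Type} [Fintype V₁] [Fintype V₂]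

lemma core (G₁ : SimpleGraph V₁) (G₂ : SimpleGraph V₂) {k₁ k₂ : ℕ}
    (hk₁ : 1 ≤ k₁)
    (hreg₁ : ∀ u, (nbr G₁ u).card = k₁) (hreg₂ : ∀ i, (nbr G₂ i).card = k₂)
    (base : Sym2 V₁ → ℕ) (ψ : Sym2 V₂ → ℕ) (offA : V₁ → ℕ)
    (hψB : ∀ i : V₂, ∀ j ∈ nbr G₂ i, ψ s(i,j) + 1 ≤ (edgesOf G₂).card)
    (C1 : ∀ ρ : V₂ ≃ Fin (Fintype.card V₂),
      Set.BijOn (lab base ψ offA (fun i => (ρ i : ℕ))) ↑(Edom G₁ G₂)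
        (Set.Icc 1 ((edgesOf G₁).card * Fintype.card V₂
          + Fintype.card V₁ * (edgesOf G₂).card)))
    (C2 : ∀ u u' : V₁, u ≠ u' →
      ((∑ v ∈ nbr G₁ u, base s(u,v)) + k₂ * offA u)
        + (k₁ * (Fintype.card V₂ - 1) + k₂ * ((edgesOf G₂).card - 1))
        < (∑ v ∈ nbr G₁ u', base s(u',v)) + k₂ * offA u' ∨
      ((∑ v ∈ nbr G₁ u', base s(u',v)) + k₂ * offA u')
        + (k₁ * (Fintype.card V₂ - 1) + k₂ * ((edgesOf G₂).card - 1))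
        < (∑ v ∈ nbr G₁ u, base s(u,v)) + k₂ * offA u) :
    IsAntimagic (G₁ □ G₂) := by
  set n := Fintype.card V₂ with hn
  set B := (edgesOf G₂).card with hB
  set m := (edgesOf G₁).card * n + Fintype.card V₁ * B with hm
  set Ssum : V₂ → ℕ := fun i => ∑ j ∈ nbr G₂ i, ψ s(i,j) with hSsum
  set ρ : V₂ ≃ Fin n := sortedRank Ssum with hρ
  set ρ' : V₂ → ℕ := fun i => (ρ i : ℕ) with hρ'
  set f := flab base ψ offA ρ' with hf
  have hbij : Set.BijOn f (G₁ □ G₂).edgeSet (Set.Icc 1 m) :=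
    bijOn_flab G₁ G₂ base ψ offA ρ' m (C1 ρ)
  have hM : Nat.card (G₁ □ G₂).edgeSet = m := by
    have h1 : Nat.card (G₁ □ G₂).edgeSet = Nat.card (Set.Icc 1 m : Set ℕ) :=
      Nat.card_congr (Set.BijOn.equiv f hbij)
    rw [h1, ← Finset.coe_Icc, Nat.card_coe_set_eq, Set.ncard_coe_finset, Nat.card_Icc]
    omega
  -- vertex sums
  set W : V₁ → ℕ := fun u => ∑ v ∈ nbr G₁ u, base s(u,v) with hW
  set X : V₁ → ℕ := fun u => W u + k₂ * offA u with hX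
  set Y : V₂ → ℕ := fun i => k₁ * ρ' i + Ssum i with hY
  have hT : ∀ u i, vertexSum (G₁ □ G₂) f (u,i) = X u + Y i + (k₁ + k₂) := by
    intro u i
    exact vertexSum_flab G₁ G₂ base ψ offA ρ' k₁ k₂ hreg₁ hreg₂ u i
  have hYle : ∀ i : V₂, Y i ≤ k₁ * (n - 1) + k₂ * (B - 1) := by
    intro i
    have h1 : ρ' i ≤ n - 1 := by
      have h0 : ρ' i < n := (ρ i).isLt
      omega
    have h2 : Ssum i ≤ k₂ * (B - 1) := by
      have := Finset.sum_le_card_nsmul (nbr G₂ i) (fun j => ψ s(i,j)) (B - 1)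
        (fun j hj => by
          have h9 : ψ s(i,j) + 1 ≤ B := hψB i j hj
          show ψ s(i,j) ≤ B - 1
          omega)
      rw [hreg₂ i] at this
      simpa [smul_eq_mul] using this
    exact Nat.add_le_add (Nat.mul_le_mul_left k₁ h1) h2
  have hYinj : ∀ i i' : V₂, ρ i < ρ i' → Y i < Y i' := by
    intro i i' hlt
    have hS : Ssum i ≤ Ssum i' := sortedRank_mono Ssum hlt
    have h2 : ρ' i + 1 ≤ ρ' i' := by
      have h0 : ρ' i < ρ' i' := hlt
      omega
    have h3 : k₁ * (ρ' i + 1) ≤ k₁ * ρ' i' := Nat.mul_le_mul_left k₁ h2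
    rw [Nat.mul_add, Nat.mul_one] at h3
    simp only [hY]
    omega
  refine ⟨f, by rw [hM]; exact hbij, ?_⟩
  rintro ⟨u, i⟩ ⟨u', i'⟩ hne hTeq
  rw [hT, hT] at hTeq
  by_cases huu : u = u'
  · subst huu
    have hii : i ≠ i' := fun h => hne (by rw [h])
    have hYeq : Y i = Y i' := by omega
    have hρne : ρ i ≠ ρ i' := fun h => hii (ρ.injective h)
    rcases lt_or_gt_of_ne hρne with h | h
    · exact absurd hYeq (Nat.ne_of_lt (hYinj i i' h))
    · exact absurd hYeq.symm (Nat.ne_of_lt (hYinj i' i h))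
  · have e1 : X u = (∑ v ∈ nbr G₁ u, base s(u,v)) + k₂ * offA u := rfl
    have e2 : X u' = (∑ v ∈ nbr G₁ u', base s(u',v)) + k₂ * offA u' := rfl
    rcases C2 u u' huu with h | h
    · have h5 := hYle i
      omega
    · have h5 := hYle i'
      omega

end AM

namespace AM
open Finset SimpleGraph
open scoped Classical

variable {V₁ V₂ : Type} [Fintype V₁] [Fintype V₂]

/-- edge enumerator -/
noncomputable def eidx {V : Type*} [Finite V] (G : SimpleGraph V) : Sym2 V → ℕ :=
  fun e => if h : e ∈ edgesOf G then ((edgesOf G).equivFin ⟨e, h⟩ : ℕ) else 0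

lemma eidx_lt {V : Type*} [Finite V] {G : SimpleGraph V} {e : Sym2 V} (he : e ∈ edgesOf G) :
    eidx G e < (edgesOf G).card := by
  rw [eidx, dif_pos he]
  exact ((edgesOf G).equivFin ⟨e, he⟩).isLt

lemma eidx_inj {V : Type*} [Finite V] {G : SimpleGraph V} {e e' : Sym2 V}
    (he : e ∈ edgesOf G) (he' : e' ∈ edgesOf G) (h : eidx G e = eidx G e') : e = e' := by
  simp only [eidx] at h
  rw [dif_pos he, dif_pos he'] at h
  have := (edgesOf G).equivFin.injective (Fin.val_injective h)
  exact congrArg Subtype.val this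

lemma Edom_cases {G₁ : SimpleGraph V₁} {G₂ : SimpleGraph V₂}
    {x : (Sym2 V₁ × V₂) ⊕ (V₁ × Sym2 V₂)} (hx : x ∈ Edom G₁ G₂) :
    (∃ fe i, x = Sum.inl (fe, i) ∧ fe ∈ edgesOf G₁) ∨
    (∃ u e2, x = Sum.inr (u, e2) ∧ e2 ∈ edgesOf G₂) := by
  rw [Edom, Finset.mem_disjSum] at hx
  rcases hx with ⟨⟨fe, i⟩, hmem, rfl⟩ | ⟨⟨u, e2⟩, hmem, rfl⟩
  · exact Or.inl ⟨fe, i, rfl, (Finset.mem_product.mp hmem).1⟩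
  · exact Or.inr ⟨u, e2, rfl, (Finset.mem_product.mp hmem).2⟩

lemma arith1 {k₁ k₂ n B : ℕ} (h12 : k₁ ≤ k₂) (hn : 1 ≤ n) (hB : 1 ≤ B) (hk₂ : 1 ≤ k₂) :
    k₁ * (n - 1) + k₂ * (B - 1) + 1 ≤ k₂ * (B + n) := by
  obtain ⟨n', rfl⟩ := Nat.exists_eq_add_of_le hn
  obtain ⟨B', rfl⟩ := Nat.exists_eq_add_of_le hB
  have h1 : k₁ * n' ≤ k₂ * n' := Nat.mul_le_mul_right n' h12
  have h2 : k₂ * (1 + B' + (1 + n')) = k₂ * B' + k₂ * n' + 2 * k₂ := by ring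
  have h3 : (1 : ℕ) ≤ 2 * k₂ := by omega
  simp only [Nat.add_sub_cancel_left] at *
  omega

lemma instI (G₁ : SimpleGraph V₁) (G₂ : SimpleGraph V₂) {k₁ k₂ : ℕ}
    (hk₁ : 1 ≤ k₁) (hk₂ : 1 ≤ k₂) (hk12 : k₁ ≤ k₂)
    (hreg₁ : ∀ u, (nbr G₁ u).card = k₁) (hreg₂ : ∀ i, (nbr G₂ i).card = k₂)
    [Nonempty V₁] [Nonempty V₂]
    (hsupply : Fintype.card V₁ ≤ (edgesOf G₁).card + 1) :
    IsAntimagic (G₁ □ G₂) := by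
  set p := Fintype.card V₁ with hp
  set n := Fintype.card V₂ with hn
  set A := (edgesOf G₁).card with hA
  set B := (edgesOf G₂).card with hBdef
  have hn1 : 1 ≤ n := Fintype.card_pos
  have hp1 : 1 ≤ p := Fintype.card_pos
  have hB1 : 1 ≤ B := by
    obtain ⟨i⟩ := (inferInstance : Nonempty V₂)
    have h0 : 0 < (nbr G₂ i).card := by rw [hreg₂ i]; omega
    obtain ⟨j, hj⟩ := Finset.card_pos.mp h0
    have : s(i, j) ∈ edgesOf G₂ :=
      mem_edgesOf.mpr ((SimpleGraph.mem_edgeSet _).mpr ((mem_nbr G₂).mp hj))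
    exact Finset.card_pos.mpr ⟨_, this⟩
  -- layout
  set R := (A + 1 - p) * n with hR
  set βv : ℕ → ℕ := fun j => if j + 1 < p then R + B + j * (B + n) else (j + 1 - p) * n with hβ
  set base : Sym2 V₁ → ℕ := fun e => βv (eidx G₁ e) with hbase
  set ψ : Sym2 V₂ → ℕ := eidx G₂ with hψ
  set W : V₁ → ℕ := fun u => ∑ v ∈ nbr G₁ u, base s(u,v) with hWdef
  set srt : V₁ ≃ Fin p := sortedRank W with hsrt
  set offA : V₁ → ℕ := fun u => R + (B + n) * (srt u : ℕ) with hoff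
  -- key identity  R + (p-1)*(B+n) = A*n + (p-1)*B
  have hkey : R + (p - 1) * (B + n) = A * n + (p - 1) * B := by
    have h1 : (A + 1 - p) + (p - 1) = A := by omega
    have : (A + 1 - p) * n + (p - 1) * n = A * n := by rw [← Nat.add_mul, h1]
    have h2 : (p - 1) * (B + n) = (p - 1) * B + (p - 1) * n := by ring
    omega
  -- bounds for labels
  have hβchunk : ∀ j, j + 1 < p → βv j + n ≤ A * n + (p - 1) * B := by
    intro j hj
    rw [hβ]
    simp only [if_pos hj]
    have h2 : j * (B + n) + (B + n) = (j + 1) * (B + n) := by ring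
    have h3 : (j + 1) * (B + n) ≤ (p - 1) * (B + n) := Nat.mul_le_mul_right _ (by omega)
    omega
  have hβrem : ∀ j, j < A → ¬(j + 1 < p) → βv j + n ≤ R := by
    intro j hjA hj
    rw [hβ]
    simp only [if_neg hj]
    have h1 : (j + 1 - p) + 1 ≤ A + 1 - p := by omega
    have h2 : (j + 1 - p) * n + n = ((j + 1 - p) + 1) * n := by ring
    have h3 : ((j + 1 - p) + 1) * n ≤ (A + 1 - p) * n := Nat.mul_le_mul_right _ h1
    omega
  have hRm : R ≤ A * n := by
    have : (A + 1 - p) ≤ A := by omega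
    calc R = (A + 1 - p) * n := rfl
    _ ≤ A * n := Nat.mul_le_mul_right _ this
  -- C1
  have C1 : ∀ ρ : V₂ ≃ Fin n,
      Set.BijOn (lab base ψ offA (fun i => (ρ i : ℕ))) ↑(Edom G₁ G₂)
        (Set.Icc 1 (A * n + p * B)) := by
    intro ρ
    have := bijOn_of_injOn_card (Edom G₁ G₂) (Finset.Icc 1 (A * n + p * B))
      (lab base ψ offA (fun i => (ρ i : ℕ))) ?hm ?hi ?hc
    · rwa [Finset.coe_Icc] at this
    case hm =>
      intro x hx
      rcases Edom_cases hx with ⟨fe, i, rfl, hfe⟩ | ⟨u, e2, rfl, he2⟩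
      · show base fe + (ρ i : ℕ) + 1 ∈ Finset.Icc 1 (A * n + p * B)
        rw [Finset.mem_Icc]
        have hc : (ρ i : ℕ) < n := (ρ i).isLt
        have hj : eidx G₁ fe < A := eidx_lt hfe
        by_cases hch : eidx G₁ fe + 1 < p
        · have := hβchunk _ hch
          have hpB : (p - 1) * B ≤ p * B := Nat.mul_le_mul_right _ (by omega)
          constructor
          · omega
          · show base fe + (ρ i : ℕ) + 1 ≤ A * n + p * B
            have : base fe = βv (eidx G₁ fe) := rfl
            omega
        · have := hβrem _ hj hch
          have : base fe = βv (eidx G₁ fe) := rfl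
          constructor
          · omega
          · have h9 : base fe + n ≤ R := by rw [this]; exact hβrem _ hj hch
            have h10 : R ≤ A * n + p * B := le_trans hRm (by omega)
            omega
      · show offA u + ψ e2 + 1 ∈ Finset.Icc 1 (A * n + p * B)
        rw [Finset.mem_Icc]
        have hψlt : ψ e2 < B := eidx_lt he2
        have hsu : (srt u : ℕ) ≤ p - 1 := by have := (srt u).isLt; omega
        have h1 : (B + n) * (srt u : ℕ) ≤ (B + n) * (p - 1) :=
          Nat.mul_le_mul_left _ hsu
        have h2 : (p - 1) * (B + n) = (B + n) * (p - 1) := Nat.mul_comm _ _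
        have h3 : (p - 1) * B + B = p * B := by
          have : (p - 1) + 1 = p := by omega
          calc (p - 1) * B + B = ((p - 1) + 1) * B := by ring
          _ = p * B := by rw [this]
        constructor
        · omega
        · show offA u + ψ e2 + 1 ≤ A * n + p * B
          have h4 : offA u = R + (B + n) * (srt u : ℕ) := rfl
          omega
    case hc =>
      rw [Nat.card_Icc, card_Edom, ← hA, ← hBdef, ← hp, ← hn]
      omega
    case hi =>
      intro x hx y hy hxy
      rw [Finset.mem_coe] at hx hy
      rcases Edom_cases hx with ⟨fe, i, rfl, hfe⟩ | ⟨u, e2, rfl, he2⟩ <;>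
        rcases Edom_cases hy with ⟨fe', i', rfl, hfe'⟩ | ⟨u', e2', rfl, he2'⟩
      · -- layer / layer
        have h : base fe + (ρ i : ℕ) = base fe' + (ρ i' : ℕ) := by
          have : base fe + (ρ i : ℕ) + 1 = base fe' + (ρ i' : ℕ) + 1 := hxy
          omega
        set j := eidx G₁ fe with hj
        set j' := eidx G₁ fe' with hj'
        have hjA : j < A := eidx_lt hfe
        have hj'A : j' < A := eidx_lt hfe'
        have hc : (ρ i : ℕ) < n := (ρ i).isLt
        have hc' : (ρ i' : ℕ) < n := (ρ i').isLt
        have hbfe : base fe = βv j := rfl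
        have hbfe' : base fe' = βv j' := rfl
        have hjj : j = j' ∧ (ρ i : ℕ) = (ρ i' : ℕ) := by
          rw [hbfe, hbfe'] at h
          by_cases h1 : j + 1 < p <;> by_cases h2 : j' + 1 < p
          · rw [hβ] at h; simp only [if_pos h1, if_pos h2] at h
            have he : j * (B + n) + (B + (ρ i : ℕ)) = j' * (B + n) + (B + (ρ i' : ℕ)) := by
              omega
            have := euclid (by omega) (by omega) he
            omega
          · exfalso
            rw [hβ] at h; simp only [if_pos h1, if_neg h2] at h
            have h3 := hβrem _ hj'A h2
            rw [hβ] at h3; simp only [if_neg h2] at h3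
            omega
          · exfalso
            rw [hβ] at h; simp only [if_neg h1, if_pos h2] at h
            have h3 := hβrem _ hjA h1
            rw [hβ] at h3; simp only [if_neg h1] at h3
            omega
          · rw [hβ] at h; simp only [if_neg h1, if_neg h2] at h
            have := euclid (M := n) hc hc' h
            omega
        have hfee : fe = fe' := eidx_inj hfe hfe' hjj.1
        have hii : i = i' := ρ.injective (Fin.val_injective hjj.2)
        rw [hfee, hii]
      · -- layer / column : impossible
        exfalso
        have h : base fe + (ρ i : ℕ) = offA u' + ψ e2' := by
          have : base fe + (ρ i : ℕ) + 1 = offA u' + ψ e2' + 1 := hxy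
          omega
        have hc : (ρ i : ℕ) < n := (ρ i).isLt
        have hψlt : ψ e2' < B := eidx_lt he2'
        set j := eidx G₁ fe with hj
        have hjA : j < A := eidx_lt hfe
        have hbfe : base fe = βv j := rfl
        have hoffu : offA u' = R + (B + n) * (srt u' : ℕ) := rfl
        by_cases h1 : j + 1 < p
        · rw [hbfe, hβ] at h; simp only [if_pos h1] at h
          have he : j * (B + n) + (B + (ρ i : ℕ)) = (srt u' : ℕ) * (B + n) + ψ e2' := by
            have : (B + n) * (srt u' : ℕ) = (srt u' : ℕ) * (B + n) := Nat.mul_comm _ _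
            omega
          have := euclid (by omega) (by omega) he
          omega
        · have h3 := hβrem _ hjA h1
          rw [hbfe] at h
          omega
      · -- column / layer : impossible
        exfalso
        have h : offA u + ψ e2 = base fe' + (ρ i' : ℕ) := by
          have : offA u + ψ e2 + 1 = base fe' + (ρ i' : ℕ) + 1 := hxy
          omega
        have hc : (ρ i' : ℕ) < n := (ρ i').isLt
        have hψlt : ψ e2 < B := eidx_lt he2
        set j := eidx G₁ fe' with hj
        have hjA : j < A := eidx_lt hfe'
        have hbfe : base fe' = βv j := rfl
        have hoffu : offA u = R + (B + n) * (srt u : ℕ) := rfl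
        by_cases h1 : j + 1 < p
        · rw [hbfe, hβ] at h; simp only [if_pos h1] at h
          have he : (srt u : ℕ) * (B + n) + ψ e2 = j * (B + n) + (B + (ρ i' : ℕ)) := by
            have : (B + n) * (srt u : ℕ) = (srt u : ℕ) * (B + n) := Nat.mul_comm _ _
            omega
          have := euclid (by omega) (by omega) he
          omega
        · have h3 := hβrem _ hjA h1
          rw [hbfe] at h
          omega
      · -- column / column
        have h : offA u + ψ e2 = offA u' + ψ e2' := by
          have : offA u + ψ e2 + 1 = offA u' + ψ e2' + 1 := hxy
          omega
        have hψlt : ψ e2 < B := eidx_lt he2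
        have hψlt' : ψ e2' < B := eidx_lt he2'
        have he : (srt u : ℕ) * (B + n) + ψ e2 = (srt u' : ℕ) * (B + n) + ψ e2' := by
          have c1 : (B + n) * (srt u : ℕ) = (srt u : ℕ) * (B + n) := Nat.mul_comm _ _
          have c2 : (B + n) * (srt u' : ℕ) = (srt u' : ℕ) * (B + n) := Nat.mul_comm _ _
          have hoffu : offA u = R + (B + n) * (srt u : ℕ) := rfl
          have hoffu' : offA u' = R + (B + n) * (srt u' : ℕ) := rfl
          omega
        have := euclid (by omega) (by omega) he
        have huu : u = u' := srt.injective (Fin.val_injective this.1)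
        have hee : e2 = e2' := eidx_inj he2 he2' this.2
        rw [huu, hee]
  -- C2
  have C2 : ∀ u u' : V₁, u ≠ u' →
      ((∑ v ∈ nbr G₁ u, base s(u,v)) + k₂ * offA u)
        + (k₁ * (n - 1) + k₂ * (B - 1))
        < (∑ v ∈ nbr G₁ u', base s(u',v)) + k₂ * offA u' ∨
      ((∑ v ∈ nbr G₁ u', base s(u',v)) + k₂ * offA u')
        + (k₁ * (n - 1) + k₂ * (B - 1))
        < (∑ v ∈ nbr G₁ u, base s(u,v)) + k₂ * offA u := by
    have key : ∀ u u' : V₁, srt u < srt u' →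
        ((∑ v ∈ nbr G₁ u, base s(u,v)) + k₂ * offA u)
          + (k₁ * (n - 1) + k₂ * (B - 1))
          < (∑ v ∈ nbr G₁ u', base s(u',v)) + k₂ * offA u' := by
      intro u u' hlt
      have hW : W u ≤ W u' := sortedRank_mono W hlt
      have hWu : W u = ∑ v ∈ nbr G₁ u, base s(u,v) := rfl
      have hWu' : W u' = ∑ v ∈ nbr G₁ u', base s(u',v) := rfl
      have hsu : (srt u : ℕ) + 1 ≤ (srt u' : ℕ) := hlt
      have m1 : (B + n) * ((srt u : ℕ) + 1) ≤ (B + n) * (srt u' : ℕ) :=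
        Nat.mul_le_mul_left _ hsu
      have m2 : k₂ * ((B + n) * ((srt u : ℕ) + 1)) ≤ k₂ * ((B + n) * (srt u' : ℕ)) :=
        Nat.mul_le_mul_left _ m1
      have m3 : k₂ * ((B + n) * ((srt u : ℕ) + 1))
          = k₂ * ((B + n) * (srt u : ℕ)) + k₂ * (B + n) := by ring
      have m4 := arith1 hk12 hn1 hB1 hk₂
      have hoffu : offA u = R + (B + n) * (srt u : ℕ) := rfl
      have hoffu' : offA u' = R + (B + n) * (srt u' : ℕ) := rfl
      have m5 : k₂ * offA u = k₂ * R + k₂ * ((B + n) * (srt u : ℕ)) := by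
        rw [hoffu]; ring
      have m6 : k₂ * offA u' = k₂ * R + k₂ * ((B + n) * (srt u' : ℕ)) := by
        rw [hoffu']; ring
      omega
    intro u u' hne
    have : srt u ≠ srt u' := fun h => hne (srt.injective h)
    rcases lt_or_gt_of_ne this with h | h
    · exact Or.inl (key u u' h)
    · exact Or.inr (key u' u h)
  -- hψB
  have hψB : ∀ i : V₂, ∀ j ∈ nbr G₂ i, ψ s(i,j) + 1 ≤ B := by
    intro i j hj
    have : s(i,j) ∈ edgesOf G₂ :=
      mem_edgesOf.mpr ((SimpleGraph.mem_edgeSet _).mpr ((mem_nbr G₂).mp hj))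
    exact eidx_lt this
  exact core G₁ G₂ hk₁ hreg₁ hreg₂ base ψ offA hψB C1 C2

end AM

namespace AM
open Finset SimpleGraph
open scoped Classical

variable {V₁ V₂ : Type} [Fintype V₁] [Fintype V₂]

lemma handshake {V : Type*} [Fintype V] (G : SimpleGraph V) (k : ℕ)
    (hreg : ∀ v, (nbr G v).card = k) : Fintype.card V * k = 2 * (edgesOf G).card := by
  classical
  have hnb : ∀ v, G.neighborFinset v = nbr G v := by
    intro v
    ext w
    rw [SimpleGraph.mem_neighborFinset, mem_nbr]
  have hed : G.edgeFinset = edgesOf G := by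
    ext e
    rw [SimpleGraph.mem_edgeFinset, mem_edgesOf]
  have h1 := SimpleGraph.sum_degrees_eq_twice_card_edges G
  have h2 : ∀ v, G.degree v = k := by
    intro v
    rw [← hreg v, SimpleGraph.degree, hnb]
  rw [Finset.sum_congr rfl (fun v _ => h2 v), Finset.sum_const, Finset.card_univ,
    smul_eq_mul, hed] at h1
  exact h1

lemma arith2 {k₂ n B g g' t t' : ℕ} (hk₂ : 1 ≤ k₂) (hg : g + 1 ≤ g') (ht : t ≤ 1)
    (hn : 1 ≤ n) (hB : 1 ≤ B) :
    (g * (2*B+n) + B + k₂ * (g * (2*B+n) + t * (B+n))) + ((n-1) + k₂ * (B-1))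
      < g' * (2*B+n) + B + k₂ * (g' * (2*B+n) + t' * (B+n)) := by
  have e1 : (g+1) * (2*B+n) ≤ g' * (2*B+n) := Nat.mul_le_mul_right _ hg
  have e2 : (g+1) * (2*B+n) = g * (2*B+n) + (2*B+n) := by ring
  have e3 : t * (B+n) ≤ B + n := by
    calc t * (B+n) ≤ 1 * (B+n) := Nat.mul_le_mul_right _ ht
    _ = B + n := Nat.one_mul _
  have e4 : k₂ * (t * (B+n)) ≤ k₂ * (B+n) := Nat.mul_le_mul_left _ e3
  have e5 : k₂ * (B-1) + k₂ = k₂ * B := by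
    have h9 : B - 1 + 1 = B := by omega
    calc k₂ * (B-1) + k₂ = k₂ * ((B-1) + 1) := by ring
    _ = k₂ * B := by rw [h9]
  have e6 : k₂ * (B+n) = k₂ * B + k₂ * n := by ring
  have e7 : k₂ * (g' * (2*B+n)) ≥ k₂ * (g * (2*B+n) + (2*B+n)) := by
    rw [← e2]; exact Nat.mul_le_mul_left _ e1
  have e8 : k₂ * (g * (2*B+n) + (2*B+n)) = k₂ * (g * (2*B+n)) + k₂ * (2*B+n) := by ring
  have e9 : k₂ * (2*B+n) = 2 * (k₂ * B) + k₂ * n := by ring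
  have e10 : n - 1 + 1 = n := by omega
  have e11 : (0:ℕ) ≤ t' * (B+n) := Nat.zero_le _
  -- LHS ≤ g(2B+n) + B + k₂ g(2B+n) + k₂B + k₂n + n - 1 + k₂B - k₂
  -- RHS ≥ g(2B+n) + (2B+n) + B + k₂ g(2B+n) + 2 k₂ B + k₂ n
  have e12 : k₂ * (t' * (B+n)) ≥ 0 := Nat.zero_le _
  nlinarith [e1, e4, e5, e7, hk₂, hn, hB]

lemma instII (G₁ : SimpleGraph V₁) (G₂ : SimpleGraph V₂) {k₂ : ℕ}
    (hk₂ : 1 ≤ k₂)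
    (hreg₁ : ∀ u, (nbr G₁ u).card = 1) (hreg₂ : ∀ i, (nbr G₂ i).card = k₂)
    [Nonempty V₁] [Nonempty V₂] :
    IsAntimagic (G₁ □ G₂) := by
  set p := Fintype.card V₁ with hp
  set n := Fintype.card V₂ with hn
  set A := (edgesOf G₁).card with hA
  set B := (edgesOf G₂).card with hBdef
  have hn1 : 1 ≤ n := Fintype.card_pos
  have hp1 : 1 ≤ p := Fintype.card_pos
  have hpA : p = 2 * A := by
    have := handshake G₁ 1 hreg₁
    rw [Nat.mul_one] at this
    exact this
  have hA1 : 1 ≤ A := by omega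
  have hB1 : 1 ≤ B := by
    obtain ⟨i⟩ := (inferInstance : Nonempty V₂)
    have h0 : 0 < (nbr G₂ i).card := by rw [hreg₂ i]; omega
    obtain ⟨j, hj⟩ := Finset.card_pos.mp h0
    have : s(i, j) ∈ edgesOf G₂ :=
      mem_edgesOf.mpr ((SimpleGraph.mem_edgeSet _).mpr ((mem_nbr G₂).mp hj))
    exact Finset.card_pos.mpr ⟨_, this⟩
  -- partner structure
  have hex : ∀ u, ∃ a, nbr G₁ u = {a} := fun u => Finset.card_eq_one.mp (hreg₁ u)
  choose pt hpt using hex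
  have hadj : ∀ u, G₁.Adj u (pt u) := by
    intro u
    have : pt u ∈ nbr G₁ u := by rw [hpt u]; exact Finset.mem_singleton_self _
    exact (mem_nbr G₁).mp this
  have hppt : ∀ u, pt (pt u) = u := by
    intro u
    have : u ∈ nbr G₁ (pt u) := (mem_nbr G₁).mpr (hadj u).symm
    rw [hpt (pt u), Finset.mem_singleton] at this
    exact this.symm
  have hptne : ∀ u, pt u ≠ u := fun u h => G₁.irrefl (h ▸ hadj u)
  set medge : V₁ → Sym2 V₁ := fun u => s(u, pt u) with hmedge
  have hmem : ∀ u, medge u ∈ edgesOf G₁ := fun u =>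
    mem_edgesOf.mpr ((SimpleGraph.mem_edgeSet _).mpr (hadj u))
  have hmcases : ∀ u u', medge u = medge u' → u' = u ∨ u' = pt u := by
    intro u u' h
    rcases Sym2.eq_iff.mp h with ⟨h1, h2⟩ | ⟨h1, h2⟩
    · exact Or.inl h1.symm
    · exact Or.inr h2.symm
  -- orientation
  set eqp : V₁ ≃ Fin p := Fintype.equivFin V₁ with heqp
  set τ : V₁ → ℕ := fun u => if (eqp u : ℕ) < (eqp (pt u) : ℕ) then 0 else 1 with hτ
  have hτ01 : ∀ u, τ u ≤ 1 := by
    intro u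
    rw [hτ]
    by_cases h : (eqp u : ℕ) < (eqp (pt u) : ℕ) <;> simp [h]
  have hτne : ∀ u, τ u ≠ τ (pt u) := by
    intro u
    have hne : (eqp u : ℕ) ≠ (eqp (pt u) : ℕ) := by
      intro h
      exact hptne u (eqp.injective (Fin.val_injective h.symm))
    rw [hτ]
    simp only [hppt u]
    rcases lt_or_gt_of_ne hne with h | h
    · rw [if_pos h, if_neg (by omega)]
      omega
    · rw [if_neg (by omega), if_pos (by omega)]
      omega
  -- labels
  set base : Sym2 V₁ → ℕ := fun e => eidx G₁ e * (2*B+n) + B with hbase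
  set ψ : Sym2 V₂ → ℕ := eidx G₂ with hψ
  set offA : V₁ → ℕ := fun u => eidx G₁ (medge u) * (2*B+n) + τ u * (B+n) with hoff
  have hpB : p * B = 2 * (A * B) := by rw [hpA]; ring
  have hAexp : A * (2*B+n) = A * n + 2 * (A * B) := by ring
  -- C1
  have C1 : ∀ ρ : V₂ ≃ Fin n,
      Set.BijOn (lab base ψ offA (fun i => (ρ i : ℕ))) ↑(Edom G₁ G₂)
        (Set.Icc 1 (A * n + p * B)) := by
    intro ρ
    have := bijOn_of_injOn_card (Edom G₁ G₂) (Finset.Icc 1 (A * n + p * B))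
      (lab base ψ offA (fun i => (ρ i : ℕ))) ?hm ?hi ?hc
    · rwa [Finset.coe_Icc] at this
    case hm =>
      intro x hx
      rcases Edom_cases hx with ⟨fe, i, rfl, hfe⟩ | ⟨u, e2, rfl, he2⟩
      · show base fe + (ρ i : ℕ) + 1 ∈ Finset.Icc 1 (A * n + p * B)
        rw [Finset.mem_Icc]
        have hc : (ρ i : ℕ) < n := (ρ i).isLt
        have hg : eidx G₁ fe + 1 ≤ A := eidx_lt hfe
        have m1 : (eidx G₁ fe + 1) * (2*B+n) ≤ A * (2*B+n) := Nat.mul_le_mul_right _ hg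
        have m2 : (eidx G₁ fe + 1) * (2*B+n) = eidx G₁ fe * (2*B+n) + (2*B+n) := by ring
        have hbf : base fe = eidx G₁ fe * (2*B+n) + B := rfl
        omega
      · show offA u + ψ e2 + 1 ∈ Finset.Icc 1 (A * n + p * B)
        rw [Finset.mem_Icc]
        have hψlt : ψ e2 + 1 ≤ B := eidx_lt he2
        have hg : eidx G₁ (medge u) + 1 ≤ A := eidx_lt (hmem u)
        have m1 : (eidx G₁ (medge u) + 1) * (2*B+n) ≤ A * (2*B+n) := Nat.mul_le_mul_right _ hg
        have m2 : (eidx G₁ (medge u) + 1) * (2*B+n)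
            = eidx G₁ (medge u) * (2*B+n) + (2*B+n) := by ring
        have m3 : τ u * (B+n) ≤ B + n := by
          calc τ u * (B+n) ≤ 1 * (B+n) := Nat.mul_le_mul_right _ (hτ01 u)
          _ = B + n := Nat.one_mul _
        have hof : offA u = eidx G₁ (medge u) * (2*B+n) + τ u * (B+n) := rfl
        omega
    case hc =>
      rw [Nat.card_Icc, card_Edom, ← hA, ← hBdef, ← hp, ← hn]
      omega
    case hi =>
      intro x hx y hy hxy
      rw [Finset.mem_coe] at hx hy
      rcases Edom_cases hx with ⟨fe, i, rfl, hfe⟩ | ⟨u, e2, rfl, he2⟩ <;>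
        rcases Edom_cases hy with ⟨fe', i', rfl, hfe'⟩ | ⟨u', e2', rfl, he2'⟩
      · have h : base fe + (ρ i : ℕ) = base fe' + (ρ i' : ℕ) := by
          have h0 : base fe + (ρ i : ℕ) + 1 = base fe' + (ρ i' : ℕ) + 1 := hxy
          omega
        have hc : (ρ i : ℕ) < n := (ρ i).isLt
        have hc' : (ρ i' : ℕ) < n := (ρ i').isLt
        have hbf : base fe = eidx G₁ fe * (2*B+n) + B := rfl
        have hbf' : base fe' = eidx G₁ fe' * (2*B+n) + B := rfl
        have he : eidx G₁ fe * (2*B+n) + (B + (ρ i : ℕ))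
            = eidx G₁ fe' * (2*B+n) + (B + (ρ i' : ℕ)) := by omega
        have := euclid (by omega) (by omega) he
        have hfee : fe = fe' := eidx_inj hfe hfe' this.1
        have hii : i = i' := ρ.injective (Fin.val_injective (by omega))
        rw [hfee, hii]
      · exfalso
        have h : base fe + (ρ i : ℕ) = offA u' + ψ e2' := by
          have h0 : base fe + (ρ i : ℕ) + 1 = offA u' + ψ e2' + 1 := hxy
          omega
        have hc : (ρ i : ℕ) < n := (ρ i).isLt
        have hψlt : ψ e2' + 1 ≤ B := eidx_lt he2'
        have hbf : base fe = eidx G₁ fe * (2*B+n) + B := rfl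
        have hof : offA u' = eidx G₁ (medge u') * (2*B+n) + τ u' * (B+n) := rfl
        have ht1 : τ u' ≤ 1 := hτ01 u'
        have he : eidx G₁ fe * (2*B+n) + (B + (ρ i : ℕ))
            = eidx G₁ (medge u') * (2*B+n) + (τ u' * (B+n) + ψ e2') := by omega
        have hlt2 : τ u' * (B+n) + ψ e2' < 2*B+n := by
          rcases Nat.le_one_iff_eq_zero_or_eq_one.mp ht1 with h0 | h1
          · rw [h0]; omega
          · rw [h1]; omega
        have := euclid (by omega) hlt2 he
        rcases Nat.le_one_iff_eq_zero_or_eq_one.mp ht1 with h0 | h1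
        · rw [h0] at this; omega
        · rw [h1] at this; omega
      · exfalso
        have h : offA u + ψ e2 = base fe' + (ρ i' : ℕ) := by
          have h0 : offA u + ψ e2 + 1 = base fe' + (ρ i' : ℕ) + 1 := hxy
          omega
        have hc : (ρ i' : ℕ) < n := (ρ i').isLt
        have hψlt : ψ e2 + 1 ≤ B := eidx_lt he2
        have hbf : base fe' = eidx G₁ fe' * (2*B+n) + B := rfl
        have hof : offA u = eidx G₁ (medge u) * (2*B+n) + τ u * (B+n) := rfl
        have ht1 : τ u ≤ 1 := hτ01 u
        have he : eidx G₁ (medge u) * (2*B+n) + (τ u * (B+n) + ψ e2)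
            = eidx G₁ fe' * (2*B+n) + (B + (ρ i' : ℕ)) := by omega
        have hlt2 : τ u * (B+n) + ψ e2 < 2*B+n := by
          rcases Nat.le_one_iff_eq_zero_or_eq_one.mp ht1 with h0 | h1
          · rw [h0]; omega
          · rw [h1]; omega
        have := euclid hlt2 (by omega) he
        rcases Nat.le_one_iff_eq_zero_or_eq_one.mp ht1 with h0 | h1
        · rw [h0] at this; omega
        · rw [h1] at this; omega
      · have h : offA u + ψ e2 = offA u' + ψ e2' := by
          have h0 : offA u + ψ e2 + 1 = offA u' + ψ e2' + 1 := hxy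
          omega
        have hψlt : ψ e2 + 1 ≤ B := eidx_lt he2
        have hψlt' : ψ e2' + 1 ≤ B := eidx_lt he2'
        have hof : offA u = eidx G₁ (medge u) * (2*B+n) + τ u * (B+n) := rfl
        have hof' : offA u' = eidx G₁ (medge u') * (2*B+n) + τ u' * (B+n) := rfl
        have ht1 : τ u ≤ 1 := hτ01 u
        have ht1' : τ u' ≤ 1 := hτ01 u'
        have hlt2 : τ u * (B+n) + ψ e2 < 2*B+n := by
          rcases Nat.le_one_iff_eq_zero_or_eq_one.mp ht1 with h0 | h1
          · rw [h0]; omega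
          · rw [h1]; omega
        have hlt2' : τ u' * (B+n) + ψ e2' < 2*B+n := by
          rcases Nat.le_one_iff_eq_zero_or_eq_one.mp ht1' with h0 | h1
          · rw [h0]; omega
          · rw [h1]; omega
        have he : eidx G₁ (medge u) * (2*B+n) + (τ u * (B+n) + ψ e2)
            = eidx G₁ (medge u') * (2*B+n) + (τ u' * (B+n) + ψ e2') := by omega
        have hq := euclid hlt2 hlt2' he
        have hmm : medge u = medge u' := eidx_inj (hmem u) (hmem u') hq.1
        have he2q : τ u * (B+n) + ψ e2 = τ u' * (B+n) + ψ e2' := hq.2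
        have hττ : τ u = τ u' ∧ ψ e2 = ψ e2' := by
          exact euclid (M := B + n) (a := τ u) (a' := τ u') (c := ψ e2) (c' := ψ e2')
            (by omega) (by omega) he2q
        have hee : e2 = e2' := eidx_inj he2 he2' hττ.2
        have huu : u = u' := by
          rcases hmcases u u' hmm with h1 | h1
          · exact h1.symm
          · exfalso
            have := hτne u
            rw [← h1] at this
            exact this hττ.1
        rw [huu, hee]
  -- C2
  have C2 : ∀ u u' : V₁, u ≠ u' →
      ((∑ v ∈ nbr G₁ u, base s(u,v)) + k₂ * offA u)
        + (1 * (n - 1) + k₂ * (B - 1))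
        < (∑ v ∈ nbr G₁ u', base s(u',v)) + k₂ * offA u' ∨
      ((∑ v ∈ nbr G₁ u', base s(u',v)) + k₂ * offA u')
        + (1 * (n - 1) + k₂ * (B - 1))
        < (∑ v ∈ nbr G₁ u, base s(u,v)) + k₂ * offA u := by
    have hWval : ∀ u : V₁, (∑ v ∈ nbr G₁ u, base s(u,v))
        = eidx G₁ (medge u) * (2*B+n) + B := by
      intro u
      rw [hpt u, Finset.sum_singleton]
    have key : ∀ u u' : V₁, eidx G₁ (medge u) + 1 ≤ eidx G₁ (medge u') →
        ((∑ v ∈ nbr G₁ u, base s(u,v)) + k₂ * offA u)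
          + (1 * (n - 1) + k₂ * (B - 1))
          < (∑ v ∈ nbr G₁ u', base s(u',v)) + k₂ * offA u' := by
      intro u u' hg
      rw [hWval u, hWval u']
      have hof : offA u = eidx G₁ (medge u) * (2*B+n) + τ u * (B+n) := rfl
      have hof' : offA u' = eidx G₁ (medge u') * (2*B+n) + τ u' * (B+n) := rfl
      rw [hof, hof', Nat.one_mul]
      exact arith2 hk₂ hg (hτ01 u) hn1 hB1
    have keyτ : ∀ u u' : V₁, medge u = medge u' → τ u = 0 → τ u' = 1 →
        ((∑ v ∈ nbr G₁ u, base s(u,v)) + k₂ * offA u)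
          + (1 * (n - 1) + k₂ * (B - 1))
          < (∑ v ∈ nbr G₁ u', base s(u',v)) + k₂ * offA u' := by
      intro u u' hm ht0 ht1
      rw [hWval u, hWval u']
      have hof : offA u = eidx G₁ (medge u) * (2*B+n) + τ u * (B+n) := rfl
      have hof' : offA u' = eidx G₁ (medge u') * (2*B+n) + τ u' * (B+n) := rfl
      rw [hof, hof', Nat.one_mul, hm, ht0, ht1]
      have e1 := arith1 (k₁ := 1) hk₂ hn1 hB1 hk₂
      rw [Nat.one_mul] at e1
      have e2 : k₂ * (eidx G₁ (medge u') * (2*B+n) + 0 * (B+n))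
          = k₂ * (eidx G₁ (medge u') * (2*B+n)) := by ring
      have e3 : k₂ * (eidx G₁ (medge u') * (2*B+n) + 1 * (B+n))
          = k₂ * (eidx G₁ (medge u') * (2*B+n)) + k₂ * (B+n) := by ring
      omega
    intro u u' hne
    rcases Nat.lt_trichotomy (eidx G₁ (medge u)) (eidx G₁ (medge u')) with h | h | h
    · exact Or.inl (key u u' (by omega))
    · -- same edge: u' = pt u
      have hmm : medge u = medge u' := eidx_inj (hmem u) (hmem u') h
      have hu' : u' = pt u := by
        rcases hmcases u u' hmm with h1 | h1
        · exact absurd h1.symm hne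
        · exact h1
      have hττ : τ u ≠ τ u' := by rw [hu']; exact hτne u
      rcases Nat.le_one_iff_eq_zero_or_eq_one.mp (hτ01 u) with h0 | h1
      · rcases Nat.le_one_iff_eq_zero_or_eq_one.mp (hτ01 u') with g0 | g1
        · exact absurd (h0.trans g0.symm) hττ
        · exact Or.inl (keyτ u u' hmm h0 g1)
      · rcases Nat.le_one_iff_eq_zero_or_eq_one.mp (hτ01 u') with g0 | g1
        · exact Or.inr (keyτ u' u hmm.symm g0 h1)
        · exact absurd (h1.trans g1.symm) hττ
    · exact Or.inr (key u' u (by omega))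
  -- hψB
  have hψB : ∀ i : V₂, ∀ j ∈ nbr G₂ i, ψ s(i,j) + 1 ≤ B := by
    intro i j hj
    have : s(i,j) ∈ edgesOf G₂ :=
      mem_edgesOf.mpr ((SimpleGraph.mem_edgeSet _).mpr ((mem_nbr G₂).mp hj))
    exact eidx_lt this
  exact core G₁ G₂ (le_refl 1) hreg₁ hreg₂ base ψ offA hψB C1 C2

end AM

namespace AM
open Finset SimpleGraph
open scoped Classical

lemma isAntimagic_of_iso {V W : Type} [Fintype V] [Fintype W] {G : SimpleGraph V}
    {H : SimpleGraph W} (φ : G ≃g H) (h : IsAntimagic G) : IsAntimagic H := by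
  obtain ⟨f, hbij, hdist⟩ := h
  set σ : Sym2 W → Sym2 V := Sym2.map ⇑φ.symm with hσ
  have hedge : ∀ e : Sym2 W, e ∈ H.edgeSet ↔ σ e ∈ G.edgeSet := by
    intro e
    induction e with
    | _ a b =>
      rw [hσ, Sym2.map_pair_eq, SimpleGraph.mem_edgeSet, SimpleGraph.mem_edgeSet]
      exact (SimpleGraph.Iso.map_adj_iff φ.symm).symm
  have hcard : Nat.card H.edgeSet = Nat.card G.edgeSet :=
    Nat.card_congr φ.mapEdgeSet.symm
  have hσbij : Set.BijOn σ H.edgeSet G.edgeSet := by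
    refine ⟨fun e he => (hedge e).mp he, ?_, ?_⟩
    · intro e _ e' _ hee
      exact Sym2.map.injective φ.symm.injective hee
    · intro e' he'
      have hcomp : σ (Sym2.map ⇑φ e') = e' := by
        rw [hσ, Sym2.map_map]
        have h9 : (⇑φ.symm ∘ ⇑φ) = id := funext fun x => φ.symm_apply_apply x
        rw [h9, Sym2.map_id, id_eq]
      exact ⟨Sym2.map ⇑φ e', (hedge _).mpr (by rw [hcomp]; exact he'), hcomp⟩
  have hVS : ∀ w : W, vertexSum H (f ∘ σ) w = vertexSum G f (φ.symm w) := by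
    intro w
    rw [vertexSum_eq_sum_nbr, vertexSum_eq_sum_nbr]
    refine Finset.sum_nbij' (fun x => φ.symm x) (fun y => φ y) ?_ ?_ ?_ ?_ ?_
    · intro x hx
      rw [mem_nbr] at hx ⊢
      exact (SimpleGraph.Iso.map_adj_iff φ.symm).mpr hx
    · intro y hy
      rw [mem_nbr] at hy ⊢
      have h2 : H.Adj (φ (φ.symm w)) (φ y) := (SimpleGraph.Iso.map_adj_iff φ).mpr hy
      rwa [φ.apply_symm_apply] at h2
    · intro x hx
      exact φ.apply_symm_apply x
    · intro y hy
      exact φ.symm_apply_apply y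
    · intro x hx
      show f (σ s(w, x)) = f s(φ.symm w, φ.symm x)
      rw [hσ, Sym2.map_pair_eq]
  refine ⟨f ∘ σ, ?_, ?_⟩
  · rw [hcard]
    exact hbij.comp hσbij
  · intro u v huv
    rw [hVS, hVS]
    exact hdist _ _ (fun h => huv (by
      have := congrArg (⇑φ) h
      rwa [φ.apply_symm_apply, φ.apply_symm_apply] at this))

lemma isAntimagic_of_isEmpty {V : Type} [Fintype V] (G : SimpleGraph V) (h : IsEmpty V) :
    IsAntimagic G := by
  have hE : G.edgeSet = ∅ := by
    ext e
    induction e with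
    | _ a b => exact (h.false a).elim
  have hc : Nat.card G.edgeSet = 0 := by
    rw [hE]
    simp
  refine ⟨fun _ => 0, ?_, ?_⟩
  · rw [hc, hE, Set.Icc_eq_empty (by omega)]
    exact Set.bijOn_empty _
  · intro u
    exact (h.false u).elim
end AM


/-- The Cartesian product of a `k₁`-regular graph and a `k₂`-regular graph
(`k₁, k₂ ≥ 1`, not necessarily connected) is antimagic. -/
theorem boxProd_regular_antimagic {V₁ V₂ : Type} [Finite V₁] [Finite V₂]
    {k₁ k₂ : ℕ} (G₁ : SimpleGraph V₁) (G₂ : SimpleGraph V₂)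
    (hreg₁ : ∀ v : V₁, Nat.card (G₁.neighborSet v) = k₁)
    (hreg₂ : ∀ v : V₂, Nat.card (G₂.neighborSet v) = k₂)
    (hk₁ : 1 ≤ k₁) (hk₂ : 1 ≤ k₂) :
    IsAntimagic (G₁ □ G₂) := by
  letI : Fintype V₁ := Fintype.ofFinite V₁
  letI : Fintype V₂ := Fintype.ofFinite V₂
  have hr₁ : ∀ u, (AM.nbr G₁ u).card = k₁ := by
    intro u
    rw [← hreg₁ u, Nat.card_coe_set_eq, Set.ncard_eq_toFinset_card]
    rfl
  have hr₂ : ∀ i, (AM.nbr G₂ i).card = k₂ := by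
    intro i
    rw [← hreg₂ i, Nat.card_coe_set_eq, Set.ncard_eq_toFinset_card]
    rfl
  rcases isEmpty_or_nonempty V₁ with hV₁ | hV₁
  · exact AM.isAntimagic_of_isEmpty _ inferInstance
  rcases isEmpty_or_nonempty V₂ with hV₂ | hV₂
  · exact AM.isAntimagic_of_isEmpty _ inferInstance
  rcases Nat.lt_or_ge k₁ 2 with h1 | h1
  · have hk : k₁ = 1 := by omega
    subst hk
    exact AM.instII G₁ G₂ hk₂ hr₁ hr₂
  by_cases h2 : k₁ ≤ k₂
  · refine AM.instI G₁ G₂ hk₁ hk₂ h2 hr₁ hr₂ ?_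
    have hsh := AM.handshake G₁ k₁ hr₁
    have hmono : Fintype.card V₁ * 2 ≤ Fintype.card V₁ * k₁ :=
      Nat.mul_le_mul_left _ h1
    omega
  · have hsw : IsAntimagic (G₂ □ G₁) := by
      rcases Nat.lt_or_ge k₂ 2 with g1 | g1
      · have hk : k₂ = 1 := by omega
        subst hk
        exact AM.instII G₂ G₁ hk₁ hr₂ hr₁
      · refine AM.instI G₂ G₁ hk₂ hk₁ (by omega) hr₂ hr₁ ?_
        have hsh := AM.handshake G₂ k₂ hr₂
        have hmono : Fintype.card V₂ * 2 ≤ Fintype.card V₂ * k₂ :=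
          Nat.mul_le_mul_left _ g1
        omega
    exact AM.isAntimagic_of_iso (SimpleGraph.boxProdComm G₂ G₁) hsw
end

section
/- For every integer m ≥ 3, the cycle C_m on m vertices is 2-approximately magic; that is, there exists a bijection f from the edge set of C_m to {1, 2, ..., m} such that every vertex sum lies in {m, m+1, m+2} (in particular, the difference between the largest and the smallest vertex sums is at most 2). -/
/-- Label of the edge `{i, i+1}` in the cycle on `m` vertices. -/
def gN (m i : ℕ) : ℕ :=
  if (i % 2 = 0 ↔ (2 * i < m ∨ m % 2 = 1)) then i + 1 else m - i

lemma gN_mem {m i : ℕ} (hi : i < m) : 1 ≤ gN m i ∧ gN m i ≤ m := by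
  unfold gN; split_ifs <;> omega

lemma gN_inj {m i j : ℕ} (hi : i < m) (hj : j < m)
    (h : gN m i = gN m j) : i = j := by
  unfold gN at h; split_ifs at h <;> omega

lemma gN_surj {m y : ℕ} (hm : 3 ≤ m) (h1 : 1 ≤ y) (h2 : y ≤ m) :
    ∃ i, i < m ∧ gN m i = y := by
  by_cases h : ((y - 1) % 2 = 0 ↔ (2 * (y - 1) < m ∨ m % 2 = 1))
  · exact ⟨y - 1, by omega, by unfold gN; split_ifs <;> omega⟩
  · exact ⟨m - y, by omega, by unfold gN; split_ifs <;> omega⟩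

lemma gN_sum {m i : ℕ} (hm : 3 ≤ m) (hi : i < m) :
    gN m i + gN m ((i + 1) % m) = m ∨ gN m i + gN m ((i + 1) % m) = m + 1 ∨
      gN m i + gN m ((i + 1) % m) = m + 2 := by
  rcases Nat.lt_or_ge (i + 1) m with h | h
  · rw [Nat.mod_eq_of_lt h]
    unfold gN; split_ifs <;> omega
  · have h' : i + 1 = m := by omega
    rw [h', Nat.mod_self]
    unfold gN; split_ifs <;> omega

lemma mod_succ {M a : ℕ} (h : a < M) :
    (a + 1 = M ∧ (a + 1) % M = 0) ∨ (a + 1 < M ∧ (a + 1) % M = a + 1) := by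
  rcases Nat.lt_or_ge (a + 1) M with h' | h'
  · exact Or.inr ⟨h', Nat.mod_eq_of_lt h'⟩
  · have hh : a + 1 = M := by omega
    exact Or.inl ⟨hh, by rw [hh, Nat.mod_self]⟩

open SimpleGraph in
lemma edge_iff {n : ℕ} (e : Sym2 (Fin (n+3))) :
    e ∈ (cycleGraph (n+3)).edgeSet ↔ ∃ u : Fin (n+3), e = s(u, u + 1) := by
  induction e using Sym2.ind with
  | _ a b =>
    rw [mem_edgeSet, cycleGraph_adj]
    constructor
    · rintro (h | h)
      · exact ⟨b, by rw [Sym2.eq_swap]; rw [sub_eq_iff_eq_add] at h; rw [h]; rw [add_comm 1 b]⟩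
      · exact ⟨a, by rw [sub_eq_iff_eq_add] at h; rw [h]; rw [add_comm 1 a]⟩
    · rintro ⟨u, h⟩
      rw [Sym2.eq_iff] at h
      rcases h with ⟨rfl, rfl⟩ | ⟨rfl, rfl⟩
      · right; exact add_sub_cancel_left a 1
      · left; exact add_sub_cancel_left b 1

/-- The edge labeling of the cycle graph. -/
def fCyc (n : ℕ) : Sym2 (Fin (n+3)) → ℕ :=
  Sym2.lift ⟨fun u v =>
    if u + 1 = v then gN (n+3) u.val else if v + 1 = u then gN (n+3) v.val else 0, by
      intro u v
      dsimp only
      split_ifs with h1 h2 <;> try rfl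
      · exfalso
        have h3 : u + 1 + 1 = u := by rw [h1, h2]
        have h4 := congrArg Fin.val h3
        simp only [Fin.val_add, Fin.val_one] at h4
        have m1 := @mod_succ (n+3) u.val u.isLt
        have m2 := @mod_succ (n+3) ((u.val + 1) % (n+3)) (Nat.mod_lt _ (by omega))
        omega⟩

lemma fCyc_eval {n : ℕ} (u : Fin (n+3)) : fCyc n s(u, u + 1) = gN (n+3) u.val := by
  unfold fCyc
  rw [Sym2.lift_mk]
  simp

open SimpleGraph in
lemma incidence {n : ℕ} (u : Fin (n+3)) :
    (cycleGraph (n+3)).incidenceSet (u+1) = {s(u, u+1), s(u+1, u+1+1)} := by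
  ext e
  induction e using Sym2.ind with
  | _ a b =>
    simp only [mk'_mem_incidenceSet_iff, cycleGraph_adj, Set.mem_insert_iff,
      Set.mem_singleton_iff, Sym2.eq_iff, sub_eq_iff_eq_add']
    have m0 := @mod_succ (n+3) u.val u.isLt
    have m1 := @mod_succ (n+3) ((u.val + 1) % (n+3)) (Nat.mod_lt _ (by omega))
    have m2 := @mod_succ (n+3) a.val a.isLt
    have m3 := @mod_succ (n+3) b.val b.isLt
    have ha := a.isLt; have hb := b.isLt; have hu := u.isLt
    simp only [Fin.ext_iff, Fin.val_add, Fin.val_one]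
    omega

/-- For every `m ≥ 3`, the cycle `C_m` is 2-approximately magic: there is a bijection
from its edge set to `{1, ..., m}` such that every vertex sum lies in `{m, m+1, m+2}`. -/
theorem cycle_two_approx_magic (m : ℕ) (hm : 3 ≤ m) :
    ∃ f : Sym2 (Fin m) → ℕ,
      Set.BijOn f (SimpleGraph.cycleGraph m).edgeSet (Set.Icc 1 m) ∧
      ∀ v : Fin m,
        vertexSum (SimpleGraph.cycleGraph m) f v ∈ ({m, m + 1, m + 2} : Set ℕ) := by
  obtain ⟨n, rfl⟩ : ∃ n, m = n + 3 := ⟨m - 3, by omega⟩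
  refine ⟨fCyc n, ⟨?_, ?_, ?_⟩, ?_⟩
  · intro e he
    obtain ⟨u, rfl⟩ := (edge_iff _).mp he
    rw [fCyc_eval]
    exact Set.mem_Icc.mpr (gN_mem u.isLt)
  · intro e1 h1 e2 h2 hf
    obtain ⟨u, rfl⟩ := (edge_iff _).mp h1; obtain ⟨w, rfl⟩ := (edge_iff _).mp h2
    rw [fCyc_eval, fCyc_eval] at hf
    have huw : u = w := Fin.ext (gN_inj u.isLt w.isLt hf)
    rw [huw]
  · intro y hy
    rw [Set.mem_Icc] at hy
    obtain ⟨i, hi, hgi⟩ := gN_surj (m := n+3) (by omega) hy.1 hy.2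
    refine ⟨s(⟨i, hi⟩, ⟨i, hi⟩ + 1), ?_, ?_⟩
    · exact (edge_iff _).mpr ⟨_, rfl⟩
    · rw [fCyc_eval]; exact hgi
  · intro v
    have hv : v = (v - 1) + 1 := (sub_add_cancel v 1).symm
    rw [hv]
    set u := v - 1 with hu
    have hset : ((SimpleGraph.cycleGraph (n+3)).incidenceSet (u+1)).toFinite.toFinset
        = ({s(u, u+1), s(u+1, u+1+1)} : Finset (Sym2 (Fin (n+3)))) := by
      ext e
      simp [Set.Finite.mem_toFinset, incidence u]
    have hne : s(u, u+1) ≠ s(u+1, u+1+1) := by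
      rw [Ne, Sym2.eq_iff]
      have m0 := @mod_succ (n+3) u.val u.isLt
      have m1 := @mod_succ (n+3) ((u.val+1) % (n+3)) (Nat.mod_lt _ (by omega))
      simp only [Fin.ext_iff, Fin.val_add, Fin.val_one]
      omega
    rw [vertexSum, hset, Finset.sum_pair hne, fCyc_eval, fCyc_eval]
    have hval : ((u+1 : Fin (n+3))).val = (u.val + 1) % (n+3) := by
      simp [Fin.val_add, Fin.val_one]
    rw [hval]
    have hs := gN_sum (m := n+3) (by omega) u.isLt
    simp only [Set.mem_insert_iff, Set.mem_singleton_iff]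
    omega
end

section
/- Let n be a positive integer divisible by 3 and let G be the finite simple graph on n vertices consisting of n/3 pairwise vertex-disjoint triangles (cycles of length 3). Then for every bijection f from the edge set of G to {1, 2, ..., n}, the difference between the largest vertex sum and the smallest vertex sum is at least 2n/3. In particular, G is not δ-approximately magic for any δ < 2n/3, so the bound ⌈2n/3⌉ for disjoint unions of odd cycles is asymptotically best possible. -/
/-- The disjoint union of `t` triangles: vertices are pairs `(a, i)` with `a` indexing
the triangle and `i ∈ Fin 3`; two vertices are adjacent iff they lie in the same
triangle and differ. -/
def disjointTriangles (t : ℕ) : SimpleGraph (Fin t × Fin 3) where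
  Adj a b := a.1 = b.1 ∧ a.2 ≠ b.2
  symm := ⟨fun _ _ ⟨h1, h2⟩ => ⟨h1.symm, h2.symm⟩⟩
  loopless := ⟨fun _ ⟨_, h⟩ => h rfl⟩

theorem fin3_cover : ∀ i j k z : Fin 3, i ≠ j → i ≠ k → j ≠ k → z = i ∨ z = j ∨ z = k := by
  decide

theorem dT_incidence (t : ℕ) (a : Fin t) (i j k : Fin 3) (hij : i ≠ j) (hik : i ≠ k)
    (hjk : j ≠ k) :
    ((disjointTriangles t).incidenceSet (a,i)).toFinite.toFinset
      = {s((a,i),(a,j)), s((a,i),(a,k))} := by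
  ext e
  induction e using Sym2.ind with
  | _ u v =>
    obtain ⟨b, x⟩ := u; obtain ⟨c, y⟩ := v
    simp only [Set.Finite.mem_toFinset, SimpleGraph.incidenceSet, Set.mem_sep_iff,
      SimpleGraph.mem_edgeSet, Sym2.mem_iff, disjointTriangles, Finset.mem_insert,
      Finset.mem_singleton, Sym2.eq_iff, Prod.mk.injEq]
    constructor
    · rintro ⟨⟨hbc, hxy⟩, ⟨hab, hix⟩ | ⟨hac, hiy⟩⟩
      · rcases fin3_cover i j k y hij hik hjk with h | h | h <;> subst_vars <;> tauto
      · rcases fin3_cover i j k x hij hik hjk with h | h | h <;> subst_vars <;> tauto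
    · rintro (⟨⟨rfl,rfl⟩,⟨rfl,rfl⟩⟩ | ⟨⟨rfl,rfl⟩,⟨rfl,rfl⟩⟩ | ⟨⟨rfl,rfl⟩,⟨rfl,rfl⟩⟩ |
          ⟨⟨rfl,rfl⟩,⟨rfl,rfl⟩⟩) <;>
        simp_all <;> tauto

theorem edge_ne (t : ℕ) (a : Fin t) (i j k : Fin 3) (hjk : j ≠ k) :
    s((a,i),(a,j)) ≠ s((a,i),(a,k)) := by
  intro h
  rw [Sym2.eq_iff] at h
  simp only [Prod.mk.injEq] at h
  rcases h with ⟨-, -, h⟩ | ⟨⟨-, h1⟩, -, h2⟩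
  · exact hjk h
  · exact hjk (h2.trans h1)

theorem dT_vertexSum (t : ℕ) (f : Sym2 (Fin t × Fin 3) → ℕ) (a : Fin t) (i j k : Fin 3)
    (hij : i ≠ j) (hik : i ≠ k) (hjk : j ≠ k) :
    vertexSum (disjointTriangles t) f (a,i) = f s((a,i),(a,j)) + f s((a,i),(a,k)) := by
  rw [vertexSum, dT_incidence t a i j k hij hik hjk,
    Finset.sum_pair (edge_ne t a i j k hjk)]

theorem edge_mem (t : ℕ) (a : Fin t) {i j : Fin 3} (h : i ≠ j) :
    s((a,i),(a,j)) ∈ (disjointTriangles t).edgeSet := by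
  simp [disjointTriangles, h]

/-- For the graph consisting of `t ≥ 1` pairwise vertex-disjoint triangles (so `n = 3t`
vertices and edges), every bijective edge labeling by `{1, ..., n}` produces two vertex
sums differing by at least `2n/3 = 2t`. Hence this graph is not `δ`-approximately magic
for any `δ < 2n/3`. -/
theorem disjoint_triangles_lower_bound (t : ℕ) (ht : 1 ≤ t)
    (f : Sym2 (Fin t × Fin 3) → ℕ)
    (hf : Set.BijOn f (disjointTriangles t).edgeSet (Set.Icc 1 (3 * t))) :
    ∃ u v : Fin t × Fin 3,
      vertexSum (disjointTriangles t) f u + 2 * t ≤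
        vertexSum (disjointTriangles t) f v := by
  classical
  have : NeZero t := ⟨by omega⟩
  -- the three edge labels of triangle a
  set X : Fin t → ℕ := fun a => f s((a,0),(a,1)) with hX
  set Y : Fin t → ℕ := fun a => f s((a,0),(a,2)) with hY
  set Z : Fin t → ℕ := fun a => f s((a,1),(a,2)) with hZ
  -- vertex sums
  have hs0 : ∀ a, vertexSum (disjointTriangles t) f (a, 0) = X a + Y a := fun a =>
    dT_vertexSum t f a 0 1 2 (by decide) (by decide) (by decide)
  have hs1 : ∀ a, vertexSum (disjointTriangles t) f (a, 1) = X a + Z a := by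
    intro a
    have := dT_vertexSum t f a 1 0 2 (by decide) (by decide) (by decide)
    rwa [@Sym2.eq_swap _ (a,(1:Fin 3)) (a,0)] at this
  have hs2 : ∀ a, vertexSum (disjointTriangles t) f (a, 2) = Y a + Z a := by
    intro a
    have := dT_vertexSum t f a 2 0 1 (by decide) (by decide) (by decide)
    rwa [@Sym2.eq_swap _ (a,(2:Fin 3)) (a,0), @Sym2.eq_swap _ (a,(2:Fin 3)) (a,1)] at this
  -- bounds on labels
  have hXm : ∀ a, X a ∈ Set.Icc 1 (3*t) := fun a => hf.mapsTo (edge_mem t a (by decide))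
  have hYm : ∀ a, Y a ∈ Set.Icc 1 (3*t) := fun a => hf.mapsTo (edge_mem t a (by decide))
  have hZm : ∀ a, Z a ∈ Set.Icc 1 (3*t) := fun a => hf.mapsTo (edge_mem t a (by decide))
  -- distinctness within a triangle
  have hXY : ∀ a, X a ≠ Y a := fun a h =>
    edge_ne t a 0 1 2 (by decide) (hf.injOn (edge_mem t a (by decide)) (edge_mem t a (by decide)) h)
  have hXZ : ∀ a, X a ≠ Z a := fun a h => by
    have := hf.injOn (edge_mem t a (show (0:Fin 3) ≠ 1 by decide))
      (edge_mem t a (show (1:Fin 3) ≠ 2 by decide)) h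
    rw [Sym2.eq_iff] at this
    simp [Prod.ext_iff] at this
  have hYZ : ∀ a, Y a ≠ Z a := fun a h => by
    have := hf.injOn (edge_mem t a (show (0:Fin 3) ≠ 2 by decide))
      (edge_mem t a (show (1:Fin 3) ≠ 2 by decide)) h
    rw [Sym2.eq_iff] at this
    simp [Prod.ext_iff] at this
  -- each label in Icc 1 3t is attained in some triangle
  have hattain : ∀ n ∈ Set.Icc 1 (3*t), ∃ a : Fin t, X a = n ∨ Y a = n ∨ Z a = n := by
    intro n hn
    obtain ⟨e, he, hfe⟩ := hf.surjOn hn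
    induction e using Sym2.ind with
    | _ u v =>
      obtain ⟨b, x⟩ := u; obtain ⟨c, y⟩ := v
      rw [SimpleGraph.mem_edgeSet] at he
      obtain ⟨hbc, hxy⟩ := he
      simp only [disjointTriangles] at hbc hxy
      refine ⟨b, ?_⟩
      have hc : c = b := hbc.symm
      subst hc
      rcases fin3_cover 0 1 2 x (by decide) (by decide) (by decide) with h | h | h <;>
        rcases fin3_cover 0 1 2 y (by decide) (by decide) (by decide) with h' | h' | h' <;>
        subst_vars <;> simp_all [hX, hY, hZ, Sym2.eq_swap]
  -- get triangle with label 3t and label 1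
  obtain ⟨b, hb⟩ := hattain (3*t) ⟨by omega, le_refl _⟩
  obtain ⟨a, ha⟩ := hattain 1 ⟨le_refl _, by omega⟩
  -- min and max vertices
  obtain ⟨u, -, hu⟩ := Finset.exists_min_image Finset.univ
    (vertexSum (disjointTriangles t) f) ⟨((0 : Fin t), (0 : Fin 3)), Finset.mem_univ _⟩
  obtain ⟨v, -, hv⟩ := Finset.exists_max_image Finset.univ
    (vertexSum (disjointTriangles t) f) ⟨((0 : Fin t), (0 : Fin 3)), Finset.mem_univ _⟩
  refine ⟨u, v, ?_⟩
  have hu0 := hu (a, 0) (Finset.mem_univ _); rw [hs0] at hu0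
  have hu1 := hu (a, 1) (Finset.mem_univ _); rw [hs1] at hu1
  have hu2 := hu (a, 2) (Finset.mem_univ _); rw [hs2] at hu2
  have hub0 := hu (b, 0) (Finset.mem_univ _); rw [hs0] at hub0
  have hub1 := hu (b, 1) (Finset.mem_univ _); rw [hs1] at hub1
  have hub2 := hu (b, 2) (Finset.mem_univ _); rw [hs2] at hub2
  have hv0 := hv (a, 0) (Finset.mem_univ _); rw [hs0] at hv0
  have hv1 := hv (a, 1) (Finset.mem_univ _); rw [hs1] at hv1
  have hv2 := hv (a, 2) (Finset.mem_univ _); rw [hs2] at hv2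
  have hvb0 := hv (b, 0) (Finset.mem_univ _); rw [hs0] at hvb0
  have hvb1 := hv (b, 1) (Finset.mem_univ _); rw [hs1] at hvb1
  have hvb2 := hv (b, 2) (Finset.mem_univ _); rw [hs2] at hvb2
  obtain ⟨hXa1, hXa2⟩ := hXm a; obtain ⟨hYa1, hYa2⟩ := hYm a
  obtain ⟨hZa1, hZa2⟩ := hZm a
  obtain ⟨hXb1, hXb2⟩ := hXm b; obtain ⟨hYb1, hYb2⟩ := hYm b
  obtain ⟨hZb1, hZb2⟩ := hZm b
  have hXYa := hXY a; have hXZa := hXZ a; have hYZa := hYZ a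
  have hXYb := hXY b; have hXZb := hXZ b; have hYZb := hYZ b
  by_cases hab : a = b
  · subst hab
    rcases ha with h | h | h <;> rcases hb with h' | h' | h' <;> omega
  · -- labels of distinct triangles are distinct
    have hdis : ∀ (p q : ℕ), (p = X a ∨ p = Y a ∨ p = Z a) → (q = X b ∨ q = Y b ∨ q = Z b) →
        p ≠ q := by
      rintro p q hp hq rfl
      have key : ∀ (i j i' j' : Fin 3), i ≠ j → i' ≠ j' →
          f s((a,i),(a,j)) ≠ f s((b,i'),(b,j')) := by
        intro i j i' j' hij hij' h
        have := hf.injOn (edge_mem t a hij) (edge_mem t b hij') h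
        rw [Sym2.eq_iff] at this
        simp [Prod.ext_iff, hab] at this
      rcases hp with rfl | rfl | rfl <;> rcases hq with h | h | h <;>
        exact absurd h (key _ _ _ _ (by decide) (by decide))
    rcases ha with h | h | h <;> rcases hb with h' | h' | h' <;>
    · -- p, q names
      omega
end

section
/- Let k ≥ 1 and let G be a k-regular finite simple graph such that every connected component of G (viewed as a graph in its own right) is antimagic. Then G is antimagic. Equivalently, a disjoint union of finitely many antimagic k-regular graphs (all of the same degree k ≥ 1) is antimagic. -/
open Finset

section Aux
open scoped Classical
set_option linter.unusedSectionVars false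

variable {V : Type} [Fintype V] (G : SimpleGraph V) [Fintype G.ConnectedComponent]

noncomputable def mE (c : G.ConnectedComponent) : ℕ :=
  Nat.card (G.induce c.supp).edgeSet

lemma mem_induce_edgeSet {s : Set V} (e : Sym2 s) :
    e ∈ (G.induce s).edgeSet ↔ Sym2.map Subtype.val e ∈ G.edgeSet := by
  induction e using Sym2.ind with
  | _ a b => simp [SimpleGraph.mem_edgeSet, Sym2.map_pair_eq]

def psi (p : Σ c : G.ConnectedComponent, ↥(G.induce c.supp).edgeSet) : Sym2 V :=
  Sym2.map Subtype.val p.2.1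

lemma psi_mem (p : Σ c : G.ConnectedComponent, ↥(G.induce c.supp).edgeSet) :
    psi G p ∈ G.edgeSet := (mem_induce_edgeSet G _).1 p.2.2

lemma psi_inj : Function.Injective (psi G) := by
  rintro ⟨c, e, he⟩ ⟨d, e', he'⟩ h
  induction e using Sym2.ind with
  | _ x y =>
  induction e' using Sym2.ind with
  | _ x' y' =>
  simp only [psi, Sym2.map_pair_eq] at h
  have hcd : c = d := by
    rw [Sym2.eq_iff] at h
    rcases h with ⟨h1, _⟩ | ⟨h1, _⟩
    · rw [← x.2.out, ← x'.2.out, h1]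
    · rw [← x.2.out, ← y'.2.out, h1]
  subst hcd
  have hmap : (s(x, y) : Sym2 c.supp) = s(x', y') := by
    apply Sym2.map.injective (Subtype.val_injective)
    rw [Sym2.map_pair_eq, Sym2.map_pair_eq]
    exact_mod_cast Sym2.eq_iff.mpr (by rcases Sym2.eq_iff.mp h with h|h; exacts [Or.inl h, Or.inr h])
  simp [hmap]

lemma range_psi : Set.range (psi G) = G.edgeSet := by
  ext ε
  constructor
  · rintro ⟨p, rfl⟩; exact psi_mem G p
  · induction ε using Sym2.ind with
    | _ u w =>
      intro h
      rw [SimpleGraph.mem_edgeSet] at h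
      refine ⟨⟨G.connectedComponentMk u, ⟨s(⟨u, rfl⟩, ⟨w, ?_⟩), ?_⟩⟩, ?_⟩
      · exact SimpleGraph.ConnectedComponent.sound h.symm.reachable
      · simpa [SimpleGraph.mem_edgeSet] using h
      · simp [psi, Sym2.map_pair_eq]

lemma card_edgeSet_eq : Nat.card G.edgeSet = ∑ c, mE G c := by
  have h1 : Nat.card ↥G.edgeSet
      = Nat.card (Σ c : G.ConnectedComponent, ↥(G.induce c.supp).edgeSet) := by
    refine (Nat.card_congr (Equiv.ofBijective (fun p => (⟨psi G p, psi_mem G p⟩ : G.edgeSet)) ⟨?_, ?_⟩)).symm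
    · intro p q h
      exact psi_inj G (by simpa using congrArg Subtype.val h)
    · rintro ⟨ε, hε⟩
      have : ε ∈ Set.range (psi G) := by rw [range_psi]; exact hε
      obtain ⟨p, hp⟩ := this
      exact ⟨p, Subtype.ext hp⟩
  rw [h1]
  haveI : ∀ c : G.ConnectedComponent, Fintype ↥(G.induce c.supp).edgeSet :=
    fun c => Fintype.ofFinite _
  rw [Nat.card_eq_fintype_card, Fintype.card_sigma]
  exact Finset.sum_congr rfl fun c _ => (Nat.card_eq_fintype_card).symm

variable (σ : G.ConnectedComponent → ℕ)

noncomputable def off (c : G.ConnectedComponent) : ℕ :=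
  ∑ d ∈ Finset.univ.filter (fun d => σ d < σ c), mE G d

lemma off_add_le {c d : G.ConnectedComponent} (h : σ c < σ d) :
    off G σ c + mE G c ≤ off G σ d := by
  have hc : c ∉ Finset.univ.filter (fun d => σ d < σ c) := by simp
  have hsub : insert c (Finset.univ.filter (fun d => σ d < σ c))
      ⊆ Finset.univ.filter (fun e => σ e < σ d) := by
    intro x hx
    simp only [Finset.mem_insert, Finset.mem_filter, Finset.mem_univ, true_and] at hx ⊢
    rcases hx with rfl | hx
    · exact h
    · exact hx.trans h
  calc off G σ c + mE G c = ∑ e ∈ insert c (Finset.univ.filter (fun d => σ d < σ c)), mE G e := by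
        rw [Finset.sum_insert hc, Nat.add_comm]; rfl
    _ ≤ _ := Finset.sum_le_sum_of_subset hsub

lemma off_add_le_total (c : G.ConnectedComponent) :
    off G σ c + mE G c ≤ ∑ e, mE G e := by
  have hc : c ∉ Finset.univ.filter (fun d => σ d < σ c) := by simp
  calc off G σ c + mE G c = ∑ e ∈ insert c (Finset.univ.filter (fun d => σ d < σ c)), mE G e := by
        rw [Finset.sum_insert hc, Nat.add_comm]; rfl
    _ ≤ _ := Finset.sum_le_sum_of_subset (Finset.subset_univ _)

variable (fc : ∀ c : G.ConnectedComponent, Sym2 c.supp → ℕ)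

noncomputable def FF (p : Σ c : G.ConnectedComponent, ↥(G.induce c.supp).edgeSet) : ℕ :=
  off G σ p.1 + fc p.1 p.2.1

noncomputable def glabel (ε : Sym2 V) : ℕ :=
  if h : ε ∈ Set.range (psi G) then FF G σ fc h.choose else 0

variable {G σ fc}

lemma glabel_psi (p : Σ c : G.ConnectedComponent, ↥(G.induce c.supp).edgeSet) :
    glabel G σ fc (psi G p) = FF G σ fc p := by
  have h : psi G p ∈ Set.range (psi G) := ⟨p, rfl⟩
  rw [glabel, dif_pos h, psi_inj G h.choose_spec]

variable (hfc : ∀ c, Set.BijOn (fc c) (G.induce c.supp).edgeSet (Set.Icc 1 (mE G c)))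

include hfc

lemma FF_mem (p : Σ c : G.ConnectedComponent, ↥(G.induce c.supp).edgeSet) :
    FF G σ fc p ∈ Set.Icc 1 (∑ c, mE G c) := by
  obtain ⟨h1, h2⟩ := (hfc p.1).1 p.2.2
  constructor
  · exact le_trans h1 (Nat.le_add_left _ _)
  · exact le_trans (Nat.add_le_add_left h2 _) (off_add_le_total G σ p.1)

lemma FF_lt {p q : Σ c : G.ConnectedComponent, ↥(G.induce c.supp).edgeSet}
    (h : σ p.1 < σ q.1) : FF G σ fc p < FF G σ fc q := by
  obtain ⟨_, h2⟩ := (hfc p.1).1 p.2.2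
  obtain ⟨h1', _⟩ := (hfc q.1).1 q.2.2
  calc FF G σ fc p ≤ off G σ p.1 + mE G p.1 := Nat.add_le_add_left h2 _
    _ ≤ off G σ q.1 := off_add_le G σ h
    _ < FF G σ fc q := Nat.lt_of_lt_of_le (Nat.lt_succ_of_le (Nat.le_refl _))
        (Nat.add_le_add_left h1' _)

lemma FF_inj (hσ : Function.Injective σ) : Function.Injective (FF G σ fc) := by
  intro p q h
  rcases lt_trichotomy (σ p.1) (σ q.1) with hlt | heq | hlt
  · exact absurd h (Nat.ne_of_lt (FF_lt hfc hlt))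
  · have hpq : p.1 = q.1 := hσ heq
    obtain ⟨c, e, he⟩ := p
    obtain ⟨d, e', he'⟩ := q
    cases hpq
    have : e = e' := (hfc c).2.1 he he' (by simpa [FF] using h)
    simp [this]
  · exact absurd h.symm (Nat.ne_of_lt (FF_lt hfc hlt))

lemma glabel_bijOn (hσ : Function.Injective σ) :
    Set.BijOn (glabel G σ fc) G.edgeSet (Set.Icc 1 (Nat.card G.edgeSet)) := by
  rw [card_edgeSet_eq]
  have hrange : ∀ ε ∈ G.edgeSet, ∃ p, psi G p = ε := by
    intro ε hε
    have : ε ∈ Set.range (psi G) := by rw [range_psi]; exact hε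
    exact this
  refine ⟨?_, ?_, ?_⟩
  · intro ε hε
    obtain ⟨p, rfl⟩ := hrange ε hε
    rw [glabel_psi]
    exact FF_mem hfc p
  · intro ε1 h1 ε2 h2 h
    obtain ⟨p, rfl⟩ := hrange ε1 h1
    obtain ⟨q, rfl⟩ := hrange ε2 h2
    rw [glabel_psi, glabel_psi] at h
    rw [FF_inj hfc hσ h]
  · haveI : ∀ c : G.ConnectedComponent, Fintype ↥(G.induce c.supp).edgeSet :=
      fun c => Fintype.ofFinite _
    intro t ht
    have himg : Finset.image (FF G σ fc) Finset.univ = Finset.Icc 1 (∑ c, mE G c) := by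
      apply Finset.eq_of_subset_of_card_le
      · intro x hx
        obtain ⟨p, _, rfl⟩ := Finset.mem_image.mp hx
        have := FF_mem (σ := σ) hfc p
        rw [Finset.mem_Icc]
        exact ⟨this.1, this.2⟩
      · rw [Nat.card_Icc, Finset.card_image_of_injective _ (FF_inj hfc hσ), Finset.card_univ,
          Fintype.card_sigma]
        have : ∀ c : G.ConnectedComponent, Fintype.card ↥(G.induce c.supp).edgeSet = mE G c :=
          fun c => (Nat.card_eq_fintype_card).symm
        simp [this]
    have : t ∈ Finset.image (FF G σ fc) Finset.univ := by
      rw [himg, Finset.mem_Icc]; exact ⟨ht.1, ht.2⟩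
    obtain ⟨p, _, hp⟩ := Finset.mem_image.mp this
    exact ⟨psi G p, psi_mem G p, by rw [glabel_psi]; exact hp⟩

omit hfc in
lemma vertexSum_glabel {v : V} {c : G.ConnectedComponent} (hv : v ∈ c.supp) :
    vertexSum G (glabel G σ fc) v
      = (((G.induce c.supp).incidenceSet ⟨v, hv⟩).toFinite.toFinset).card * off G σ c
        + vertexSum (G.induce c.supp) (fc c) ⟨v, hv⟩ := by
  classical
  have hvc' : G.connectedComponentMk v = c := hv.out
  cases hvc'
  set c := G.connectedComponentMk v with hc
  set vc : c.supp := ⟨v, hv⟩ with hvc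
  have key : ∑ e ∈ ((G.induce c.supp).incidenceSet vc).toFinite.toFinset,
        (off G σ c + fc c e)
      = ∑ ε ∈ (G.incidenceSet v).toFinite.toFinset, glabel G σ fc ε := by
    refine Finset.sum_bij (fun e _ => Sym2.map Subtype.val e) ?_ ?_ ?_ ?_
    · intro e he
      rw [Set.Finite.mem_toFinset] at he ⊢
      obtain ⟨he1, he2⟩ := he
      exact ⟨(mem_induce_edgeSet G e).1 he1, Sym2.mem_map.2 ⟨vc, he2, rfl⟩⟩
    · intro e1 _ e2 _ h
      exact Sym2.map.injective Subtype.val_injective h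
    · intro ε hε
      rw [Set.Finite.mem_toFinset] at hε
      obtain ⟨hε1, hε2⟩ := hε
      obtain ⟨u, rfl⟩ := Sym2.mem_iff_exists.mp hε2
      have hadj : G.Adj v u := (SimpleGraph.mem_edgeSet G).mp hε1
      have hu : u ∈ c.supp :=
        (SimpleGraph.ConnectedComponent.sound hadj.symm.reachable : _)
      refine ⟨s(vc, ⟨u, hu⟩), ?_, by simp [Sym2.map_pair_eq, hvc]⟩
      rw [Set.Finite.mem_toFinset]
      constructor
      · simpa [SimpleGraph.mem_edgeSet] using hadj
      · exact Sym2.mem_mk_left _ _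
    · intro e he
      rw [Set.Finite.mem_toFinset] at he
      show off G σ c + fc c e = glabel G σ fc (Sym2.map Subtype.val e)
      have heq : Sym2.map Subtype.val e = psi G ⟨c, ⟨e, he.1⟩⟩ := rfl
      rw [heq, glabel_psi]
      rfl
  rw [vertexSum, vertexSum, ← key, Finset.sum_add_distrib, Finset.sum_const]
  simp [nsmul_eq_mul]
  rfl

omit hfc in
lemma card_incidence_induce (c : G.ConnectedComponent) (w : c.supp) :
    (((G.induce c.supp).incidenceSet w).toFinite.toFinset).card
      = Nat.card (G.neighborSet w.1) := by
  rw [← Set.ncard_eq_toFinset_card _ _, ← Nat.card_coe_set_eq,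
    Nat.card_congr ((G.induce c.supp).incidenceSetEquivNeighborSet w)]
  have hmem : ∀ u : G.neighborSet w.1, u.1 ∈ c.supp := fun u =>
    (SimpleGraph.ConnectedComponent.sound u.2.symm.reachable).trans w.2.out
  exact Nat.card_congr ⟨fun x => ⟨x.1.1, x.2⟩, fun u => ⟨⟨u.1, hmem u⟩, u.2⟩,
    fun x => rfl, fun u => rfl⟩

lemma vertexSum_comp_bounds (c : G.ConnectedComponent) (w : c.supp)
    (hpos : 1 ≤ (((G.induce c.supp).incidenceSet w).toFinite.toFinset).card) :
    1 ≤ vertexSum (G.induce c.supp) (fc c) w ∧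
      vertexSum (G.induce c.supp) (fc c) w
        ≤ (((G.induce c.supp).incidenceSet w).toFinite.toFinset).card * mE G c := by
  classical
  set T := ((G.induce c.supp).incidenceSet w).toFinite.toFinset with hT
  have hmem : ∀ e ∈ T, fc c e ∈ Set.Icc 1 (mE G c) := by
    intro e he
    rw [Set.Finite.mem_toFinset] at he
    exact (hfc c).1 he.1
  constructor
  · obtain ⟨e, he⟩ := Finset.card_pos.mp hpos
    calc 1 ≤ fc c e := (hmem e he).1
      _ ≤ _ := Finset.single_le_sum (fun _ _ => Nat.zero_le _) he
  · calc vertexSum (G.induce c.supp) (fc c) w ≤ T.card • mE G c :=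
        Finset.sum_le_card_nsmul T _ _ (fun e he => (hmem e he).2)
      _ = _ := by simp [nsmul_eq_mul]

end Aux

/-- If `G` is `k`-regular with `k ≥ 1` and every connected component of `G` (as a graph
in its own right) is antimagic, then `G` is antimagic. -/
theorem regular_components_antimagic {V : Type} [Finite V] {k : ℕ}
    (G : SimpleGraph V)
    (hreg : ∀ v : V, Nat.card (G.neighborSet v) = k) (hk : 1 ≤ k)
    (hcomp : ∀ c : G.ConnectedComponent, IsAntimagic (G.induce c.supp)) :
    IsAntimagic G := by
  classical
  cases nonempty_fintype V
  haveI : Fintype G.ConnectedComponent := Fintype.ofFinite _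
  choose fc hfc1 hfc2 using hcomp
  have hfc : ∀ c, Set.BijOn (fc c) (G.induce c.supp).edgeSet (Set.Icc 1 (mE G c)) := hfc1
  set σ : G.ConnectedComponent → ℕ := fun c => ((Fintype.equivFin _) c : ℕ) with hσdef
  have hσ : Function.Injective σ := fun a b h =>
    (Fintype.equivFin _).injective (Fin.val_injective h)
  have hcard : ∀ (c : G.ConnectedComponent) (w : c.supp),
      (((G.induce c.supp).incidenceSet w).toFinite.toFinset).card = k := fun c w =>
    (card_incidence_induce c w).trans (hreg w.1)
  refine ⟨glabel G σ fc, glabel_bijOn hfc hσ, ?_⟩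
  have bounds : ∀ (c : G.ConnectedComponent) (w : c.supp),
      1 ≤ vertexSum (G.induce c.supp) (fc c) w ∧
        vertexSum (G.induce c.supp) (fc c) w ≤ k * mE G c := by
    intro c w
    have := vertexSum_comp_bounds hfc c w (by rw [hcard]; exact hk)
    rwa [hcard] at this
  have main : ∀ x y : V,
      σ (G.connectedComponentMk x) < σ (G.connectedComponentMk y) →
      vertexSum G (glabel G σ fc) x < vertexSum G (glabel G σ fc) y := by
    intro x y hlt
    have hx : x ∈ (G.connectedComponentMk x).supp := rfl
    have hy : y ∈ (G.connectedComponentMk y).supp := rfl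
    rw [vertexSum_glabel hx, vertexSum_glabel hy, hcard, hcard]
    have bx := bounds (G.connectedComponentMk x) ⟨x, hx⟩
    have by' := bounds (G.connectedComponentMk y) ⟨y, hy⟩
    calc k * off G σ (G.connectedComponentMk x)
          + vertexSum (G.induce (G.connectedComponentMk x).supp)
              (fc (G.connectedComponentMk x)) ⟨x, hx⟩
        ≤ k * off G σ (G.connectedComponentMk x) + k * mE G (G.connectedComponentMk x) :=
          Nat.add_le_add_left bx.2 _
      _ = k * (off G σ (G.connectedComponentMk x) + mE G (G.connectedComponentMk x)) :=
          (Nat.mul_add _ _ _).symm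
      _ ≤ k * off G σ (G.connectedComponentMk y) :=
          Nat.mul_le_mul_left _ (off_add_le G σ hlt)
      _ < _ := Nat.lt_add_of_pos_right (by'.1)
  intro u v huv
  by_cases h : G.connectedComponentMk u = G.connectedComponentMk v
  · have hu : u ∈ (G.connectedComponentMk u).supp := rfl
    have hv : v ∈ (G.connectedComponentMk u).supp := h.symm
    rw [vertexSum_glabel hu, vertexSum_glabel hv, hcard, hcard]
    intro hEq
    exact hfc2 _ ⟨u, hu⟩ ⟨v, hv⟩ (fun hx => huv (congrArg Subtype.val hx))
      (Nat.add_left_cancel hEq)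
  · have hσne : σ (G.connectedComponentMk u) ≠ σ (G.connectedComponentMk v) :=
      fun hEq => h (hσ hEq)
    rcases lt_or_gt_of_ne hσne with hlt | hlt
    · exact Nat.ne_of_lt (main u v hlt)
    · exact (Nat.ne_of_lt (main v u hlt)).symm
end
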